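/- arXiv:1210.5345 — 5 statements merged into one kernel-verified Lean document; each statement's English description precedes it below -/
import Mathlib

section
/- Let d ≥ 1, K ≥ 1, n > 0. Let w_1,…,w_K > 0 and σ_1,…,σ_K ≥ 0 with Σ_K := Σ_{k=1}^K (w_k σ_k)^{d/(d+1)} > 0. Then for any positive reals S_1,…,S_K with Σ_{k=1}^K S_k ≤ n, one has Σ_{k=1}^K w_k² σ_k² / S_k^{1+2/d} ≥ Σ_K^{2(d+1)/d} / n^{1+2/d}, and equality holds for the choice S_k = λ_{K,k} n where λ_{K,k} = (w_k σ_k)^{d/(d+1)} / Σ_K (provided σ_k > 0 for all k). -/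
open MeasureTheory Filter Set
open scoped ENNReal RealInnerProductSpace

noncomputable def unitCube (d : ℕ) : Set (EuclideanSpace ℝ (Fin d)) :=
  {x | ∀ i, x i ∈ Set.Icc (0:ℝ) 1}

/-- Mean of `f` on `Ω` (w.r.t. normalized Lebesgue measure on `Ω`). -/
noncomputable def meanOn {d : ℕ} (f : EuclideanSpace ℝ (Fin d) → ℝ)
    (Ω : Set (EuclideanSpace ℝ (Fin d))) : ℝ :=
  (volume Ω).toReal⁻¹ * ∫ x in Ω, f x

/-- Variance of `f` on `Ω`. -/
noncomputable def varOn {d : ℕ} (f : EuclideanSpace ℝ (Fin d) → ℝ)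
    (Ω : Set (EuclideanSpace ℝ (Fin d))) : ℝ :=
  (volume Ω).toReal⁻¹ * ∫ x in Ω, (f x - meanOn f Ω)^2

/-- Standard deviation of `f` on `Ω`. -/
noncomputable def stddevOn {d : ℕ} (f : EuclideanSpace ℝ (Fin d) → ℝ)
    (Ω : Set (EuclideanSpace ℝ (Fin d))) : ℝ :=
  Real.sqrt (varOn f Ω)

/-- `Ω` is an axis-aligned hypercube (product of `d` intervals of equal positive length). -/
def IsCube {d : ℕ} (Ω : Set (EuclideanSpace ℝ (Fin d))) : Prop :=
  ∃ (a : Fin d → ℝ) (l : ℝ), 0 < l ∧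
    Ω = {x : EuclideanSpace ℝ (Fin d) | ∀ i, x i ∈ Set.Icc (a i) (a i + l)}

/-- The axis-aligned hypercube of Lebesgue measure `w` centered at `a`. -/
noncomputable def centeredCube (d : ℕ) (a : EuclideanSpace ℝ (Fin d)) (w : ℝ) :
    Set (EuclideanSpace ℝ (Fin d)) :=
  {x | ∀ i, x i ∈ Set.Icc (a i - w ^ (1/(d:ℝ)) / 2) (a i + w ^ (1/(d:ℝ)) / 2)}

/-- `Ωs` is a partition (up to null sets) of the unit cube `[0,1]^d`. -/
def IsAEPartition {d : ℕ} {ι : Type*} (Ωs : ι → Set (EuclideanSpace ℝ (Fin d))) : Prop :=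
  (∀ k, MeasurableSet (Ωs k)) ∧ (∀ k, Ωs k ⊆ unitCube d) ∧
  (∀ k j, k ≠ j → volume (Ωs k ∩ Ωs j) = 0) ∧
  volume (unitCube d \ ⋃ k, Ωs k) = 0


/-- The optimal oracle allocation problem: lower bound on the pseudo-risk for any
allocation, with equality at the optimal proportions. -/
theorem stmt4 (d K : ℕ) (hd : 1 ≤ d) (hK : 1 ≤ K) (n : ℝ) (hn : 0 < n)
    (w σ : Fin K → ℝ) (hw : ∀ k, 0 < w k) (hσ : ∀ k, 0 ≤ σ k)
    (hSigma : 0 < ∑ k, (w k * σ k) ^ ((d:ℝ)/((d:ℝ)+1))) :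
    (∀ S : Fin K → ℝ, (∀ k, 0 < S k) → (∑ k, S k) ≤ n →
        (∑ k, (w k * σ k) ^ ((d:ℝ)/((d:ℝ)+1))) ^ (2*((d:ℝ)+1)/(d:ℝ)) / n ^ (1+2/(d:ℝ))
          ≤ ∑ k, (w k)^2 * (σ k)^2 / (S k) ^ (1+2/(d:ℝ)))
    ∧ ((∀ k, 0 < σ k) →
        (∑ k, (w k)^2 * (σ k)^2 /
            (((w k * σ k) ^ ((d:ℝ)/((d:ℝ)+1))
                / (∑ i, (w i * σ i) ^ ((d:ℝ)/((d:ℝ)+1))) * n) ^ (1+2/(d:ℝ))))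
          = (∑ k, (w k * σ k) ^ ((d:ℝ)/((d:ℝ)+1))) ^ (2*((d:ℝ)+1)/(d:ℝ)) / n ^ (1+2/(d:ℝ))) := by

  have hD : (0:ℝ) < d := by exact_mod_cast Nat.lt_of_lt_of_le Nat.zero_lt_one hd
  set D : ℝ := (d:ℝ) with hDdef
  set p : ℝ := 1 + 2/D with hp
  set q : ℝ := 2*(D+1)/D with hq
  have hp_pos : 0 < p := by positivity
  have hq_pos : 0 < q := by positivity
  have hqp : q = p + 1 := by field_simp [hq, hp]; rw [hq, hp]; field_simp; ring
  have hdd : D/(D+1) = 2/q := by rw [hq]; field_simp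
  set Sig : ℝ := ∑ k, (w k * σ k) ^ (D/(D+1)) with hS0
  have hSigpos : 0 < Sig := hSigma
  have hq1 : 1 < q := by rw [hqp]; linarith
  have hck : ∀ k, (w k * σ k) ^ (D/(D+1)) = ((w k)^2 * (σ k)^2) ^ (1/q) := by
    intro k
    have hws : (0:ℝ) ≤ w k * σ k := mul_nonneg (hw k).le (hσ k)
    rw [hdd, show (w k)^2 * (σ k)^2 = (w k * σ k) ^ (2:ℕ) by ring,
      ← Real.rpow_natCast (w k * σ k) 2, ← Real.rpow_mul hws]
    norm_num [div_eq_mul_inv]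
  constructor
  · intro S hSpos hSn
    set R : ℝ := ∑ k, (w k)^2 * (σ k)^2 / (S k) ^ p with hR
    have hRnn : 0 ≤ R := Finset.sum_nonneg fun k _ => div_nonneg (by positivity) (Real.rpow_nonneg (hSpos k).le _)
    set q' : ℝ := q/(q-1) with hq'
    have hconj : q.HolderConjugate q' := Real.HolderConjugate.conjExponent hq1
    have h1q' : 1/q' = p/q := by
      rw [hq', one_div, inv_div, hqp]; ring_nf
    set f : Fin K → ℝ := fun k => ((w k)^2 * (σ k)^2 / (S k) ^ p) ^ (1/q) with hf
    set g : Fin K → ℝ := fun k => (S k) ^ (1/q') with hg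
    have hfnn : ∀ k, 0 ≤ f k := fun k => Real.rpow_nonneg (div_nonneg (by positivity) (Real.rpow_nonneg (hSpos k).le _)) _
    have hgnn : ∀ k, 0 ≤ g k := fun k => Real.rpow_nonneg (hSpos k).le _
    have key : ∑ k, f k * g k ≤ (∑ k, |f k| ^ q) ^ (1/q) * (∑ k, |g k| ^ q') ^ (1/q') :=
      Real.inner_le_Lp_mul_Lq Finset.univ f g hconj
    have hfq : ∀ k, |f k| ^ q = (w k)^2 * (σ k)^2 / (S k) ^ p := by
      intro k
      have hx : (0:ℝ) ≤ (w k)^2 * (σ k)^2 / (S k) ^ p :=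
        div_nonneg (by positivity) (Real.rpow_nonneg (hSpos k).le _)
      rw [abs_of_nonneg (hfnn k), hf, ← Real.rpow_mul hx,
        one_div_mul_cancel hq_pos.ne', Real.rpow_one]
    have hgq : ∀ k, |g k| ^ q' = S k := by
      intro k
      have hq'pos : 0 < q' := hconj.symm.pos
      rw [abs_of_nonneg (hgnn k), hg, ← Real.rpow_mul (hSpos k).le,
        one_div_mul_cancel hq'pos.ne', Real.rpow_one]
    have hfg : ∀ k, f k * g k = (w k * σ k) ^ (D/(D+1)) := by
      intro k
      have hSk := hSpos k
      simp only [hf, hg]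
      rw [hck k, Real.div_rpow (by positivity) (by positivity),
        ← Real.rpow_mul hSk.le, h1q', div_eq_mul_inv (((w k)^2 * (σ k)^2) ^ (1/q)),
        mul_assoc, ← Real.rpow_neg hSk.le, ← Real.rpow_add hSk]
      rw [show p * (1/q) = p/q by ring, neg_add_cancel, Real.rpow_zero, mul_one]
    rw [Finset.sum_congr rfl (fun k _ => hfq k), Finset.sum_congr rfl (fun k _ => hgq k),
      Finset.sum_congr rfl (fun k _ => hfg k)] at key
    have hSn' : (∑ k, S k) ^ (1/q') ≤ n ^ (1/q') :=
      Real.rpow_le_rpow (Finset.sum_nonneg fun k _ => (hSpos k).le) hSn (one_div_pos.mpr hconj.symm.pos).le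
    have key2 : Sig ≤ R ^ (1/q) * n ^ (1/q') :=
      key.trans (mul_le_mul_of_nonneg_left hSn' (Real.rpow_nonneg hRnn _))
    have key3 : Sig ^ q ≤ R * n ^ p := by
      have := Real.rpow_le_rpow hSigpos.le key2 hq_pos.le
      rwa [Real.mul_rpow (Real.rpow_nonneg hRnn _) (Real.rpow_nonneg hn.le _), ← Real.rpow_mul hRnn,
        one_div_mul_cancel hq_pos.ne', Real.rpow_one, ← Real.rpow_mul hn.le,
        h1q', div_mul_cancel₀ _ hq_pos.ne'] at this
    rw [div_le_iff₀ (by positivity)]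
    exact key3
  · intro hσpos
    have hterm : ∀ k : Fin K,
        (w k)^2 * (σ k)^2 / (((w k * σ k) ^ (D/(D+1)) / Sig * n) ^ p)
          = (w k * σ k) ^ (D/(D+1)) * (Sig ^ p / n ^ p) := by
      intro k
      have hwσ : 0 < w k * σ k := mul_pos (hw k) (hσpos k)
      have hcpos : 0 < (w k * σ k) ^ (D/(D+1)) := Real.rpow_pos_of_pos hwσ _
      rw [Real.mul_rpow (div_nonneg hcpos.le hSigpos.le) hn.le,
        Real.div_rpow hcpos.le hSigpos.le, ← Real.rpow_mul hwσ.le]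
      have h3 : (w k)^2 * (σ k)^2 = (w k * σ k) ^ (D/(D+1) + D/(D+1) * p) := by
        have hp1 : p + 1 ≠ 0 := by positivity
        have he : D/(D+1) + D/(D+1) * p = (2:ℝ) := by
          rw [hdd, hqp]; field_simp; ring
        rw [he, show (2:ℝ) = ((2:ℕ):ℝ) by norm_num, Real.rpow_natCast]
        ring
      rw [h3, Real.rpow_add hwσ]
      have hb : (w k * σ k) ^ (D/(D+1) * p) ≠ 0 := (Real.rpow_pos_of_pos hwσ _).ne'
      have hnp : (n:ℝ) ^ p ≠ 0 := (Real.rpow_pos_of_pos hn _).ne'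
      have hsp : Sig ^ p ≠ 0 := (Real.rpow_pos_of_pos hSigpos _).ne'
      field_simp
    rw [Finset.sum_congr rfl (fun k _ => hterm k), ← Finset.sum_mul, ← hS0, hqp,
      Real.rpow_add_one hSigpos.ne' p]
    field_simp
end

section
/- Let d ≥ 1 and let g : [0,1]^d → [0,∞) be measurable. Then for every measurable s : [0,1]^d → (0,∞) with ∫_{[0,1]^d} s(x) dx = 1, one has ∫_{[0,1]^d} g(x) · s(x)^{−(1+2/d)} dx ≥ (∫_{[0,1]^d} g(x)^{d/(2(d+1))} dx)^{2(d+1)/d}. -/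
open MeasureTheory Filter Set
open scoped ENNReal RealInnerProductSpace

/-- The continuous optimal-allocation inequality: for any probability density `s` on the
unit cube, `∫ g / s^{1+2/d} ≥ (∫ g^{d/(2(d+1))})^{2(d+1)/d}`. -/
theorem stmt6 (d : ℕ) (hd : 1 ≤ d)
    (g s : EuclideanSpace ℝ (Fin d) → ℝ)
    (hg : Measurable g) (hg0 : ∀ x, 0 ≤ g x)
    (hs : Measurable s) (hs0 : ∀ x, 0 < s x)
    (hs1 : ∫⁻ x in unitCube d, ENNReal.ofReal (s x) = 1) :
    (∫⁻ x in unitCube d, ENNReal.ofReal (g x ^ ((d:ℝ)/(2*((d:ℝ)+1))))) ^ (2*((d:ℝ)+1)/(d:ℝ))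
      ≤ ∫⁻ x in unitCube d, ENNReal.ofReal (g x * (s x) ^ (-(1+2/(d:ℝ)))) := by
  have hd0 : (0:ℝ) < d := by exact_mod_cast Nat.pos_of_ne_zero (by omega)
  set p : ℝ := 2*((d:ℝ)+1)/(d:ℝ) with hp
  set q : ℝ := 2*((d:ℝ)+1)/((d:ℝ)+2) with hq
  have hpq : p.HolderConjugate q := by
    rw [Real.holderConjugate_iff]
    constructor
    · rw [hp, lt_div_iff₀ hd0]; nlinarith
    · rw [hp, hq]; field_simp; ring
  have hp0 : 0 < p := hpq.pos
  have hq0 : 0 < q := hpq.symm.pos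
  set F : EuclideanSpace ℝ (Fin d) → ℝ≥0∞ :=
    fun x => ENNReal.ofReal (g x * (s x) ^ (-(1+2/(d:ℝ)))) with hF
  set S : EuclideanSpace ℝ (Fin d) → ℝ≥0∞ := fun x => ENNReal.ofReal (s x) with hS
  have e1 : (1:ℝ)/p = (d:ℝ)/(2*((d:ℝ)+1)) := by rw [hp]; field_simp
  have e2 : (-(1+2/(d:ℝ)))*(1/p) + 1/q = 0 := by
    rw [hp, hq]; field_simp; ring
  have key : ∀ x, ENNReal.ofReal (g x ^ ((d:ℝ)/(2*((d:ℝ)+1))))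
      = (F x) ^ (1/p) * (S x) ^ (1/q) := by
    intro x
    have hsx := hs0 x
    have hgx := hg0 x
    have h1 : F x ^ (1/p) = ENNReal.ofReal ((g x * (s x) ^ (-(1+2/(d:ℝ)))) ^ (1/p)) := by
      rw [hF, ← ENNReal.ofReal_rpow_of_nonneg (by positivity) (by positivity)]
    have h2 : S x ^ (1/q) = ENNReal.ofReal ((s x) ^ (1/q)) := by
      rw [hS, ← ENNReal.ofReal_rpow_of_nonneg hsx.le (by positivity)]
    rw [h1, h2, ← ENNReal.ofReal_mul (by positivity)]
    congr 1
    rw [Real.mul_rpow hgx (by positivity), ← Real.rpow_mul hsx.le, mul_assoc,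
      ← Real.rpow_add hsx, e2, Real.rpow_zero, mul_one, e1]
  set μ := volume.restrict (unitCube d) with hμ
  have hFm : AEMeasurable (fun x => F x ^ (1/p)) μ := by
    have : Measurable F := by
      exact ENNReal.measurable_ofReal.comp (hg.mul (hs.pow measurable_const))
    exact (this.pow measurable_const).aemeasurable
  have hSm : AEMeasurable (fun x => S x ^ (1/q)) μ := by
    have : Measurable S := ENNReal.measurable_ofReal.comp hs
    exact (this.pow measurable_const).aemeasurable
  have H := ENNReal.lintegral_mul_le_Lp_mul_Lq μ hpq hFm hSm
  simp only [Pi.mul_apply, ← ENNReal.rpow_natCast] at H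
  have rpow_cancel : ∀ a : ℝ≥0∞, (a ^ (1/p)) ^ p = a := by
    intro a
    rw [← ENNReal.rpow_mul, one_div_mul_cancel hp0.ne', ENNReal.rpow_one]
  have rpow_cancelq : ∀ a : ℝ≥0∞, (a ^ (1/q)) ^ q = a := by
    intro a
    rw [← ENNReal.rpow_mul, one_div_mul_cancel hq0.ne', ENNReal.rpow_one]
  simp only [rpow_cancel, rpow_cancelq] at H
  have hS1 : ∫⁻ x, S x ∂μ = 1 := hs1
  rw [hS1, ENNReal.one_rpow, mul_one] at H
  have H2 : ∫⁻ x, ENNReal.ofReal (g x ^ ((d:ℝ)/(2*((d:ℝ)+1)))) ∂μ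
      ≤ (∫⁻ x, F x ∂μ) ^ (1/p) := by
    calc ∫⁻ x, ENNReal.ofReal (g x ^ ((d:ℝ)/(2*((d:ℝ)+1)))) ∂μ
        = ∫⁻ x, (F x) ^ (1/p) * (S x) ^ (1/q) ∂μ := by simp_rw [key]
      _ ≤ _ := H
  calc (∫⁻ x, ENNReal.ofReal (g x ^ ((d:ℝ)/(2*((d:ℝ)+1)))) ∂μ) ^ p
      ≤ ((∫⁻ x, F x ∂μ) ^ (1/p)) ^ p := ENNReal.rpow_le_rpow H2 hp0.le
    _ = ∫⁻ x, F x ∂μ := rpow_cancel _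
end

section
/- Let d ≥ 1 and let f : [0,1]^d → ℝ be differentiable with |f(x) − f(a) − ⟨∇f(a), x − a⟩| ≤ M‖x − a‖₂² for all x, a ∈ [0,1]^d. Let Ω_w ⊆ [0,1]^d be an axis-aligned hypercube of Lebesgue measure w > 0 centered at a, and let σ² be the variance of f on Ω_w. Then w² σ² ≤ w^{2+2/d} ( ‖∇f(a)‖₂/(2√3) + 2Md · w^{1/d} )². -/
set_option maxHeartbeats 1000000

open MeasureTheory Filter Set
open scoped ENNReal RealInnerProductSpace

/-! ### Auxiliary lemmas -/

section Aux

theorem aux_prod_integral {d : ℕ} (S : Fin d → Set ℝ) (hS : ∀ i, MeasurableSet (S i))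
    (h : Fin d → ℝ → ℝ) :
    ∫ y in Set.pi univ S, ∏ k, h k (y k) = ∏ k, ∫ t in S k, h k t := by
  rw [← integral_indicator (MeasurableSet.univ_pi hS)]
  have heq : (Set.pi univ S).indicator (fun y => ∏ k, h k (y k))
      = fun y => ∏ k, (S k).indicator (h k) (y k) := by
    funext y
    by_cases hy : y ∈ Set.pi univ S
    · rw [indicator_of_mem hy]
      exact Finset.prod_congr rfl fun k _ => (indicator_of_mem (hy k (mem_univ k)) _).symm
    · rw [indicator_of_notMem hy]
      rw [Set.mem_pi] at hy; push_neg at hy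
      obtain ⟨k, -, hk⟩ := hy
      exact (Finset.prod_eq_zero (Finset.mem_univ k) (indicator_of_notMem hk _)).symm
  rw [heq]
  refine (MeasureTheory.integral_fintype_prod_eq_prod (μ := fun _ => volume)
    (fun k => (S k).indicator (h k))).trans ?_
  exact Finset.prod_congr rfl fun k _ => integral_indicator (hS k)

theorem aux_int_one (c s : ℝ) (hs : 0 ≤ s) : ∫ _t in Icc (c - s/2) (c + s/2), (1:ℝ) = s := by
  rw [setIntegral_const, smul_eq_mul, mul_one, Real.volume_real_Icc,
    show c + s/2 - (c - s/2) = s by ring, max_eq_left hs]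

theorem aux_int_lin (c s : ℝ) (hs : 0 ≤ s) : ∫ t in Icc (c - s/2) (c + s/2), (t - c) = 0 := by
  rw [integral_Icc_eq_integral_Ioc, ← intervalIntegral.integral_of_le (by linarith)]
  rw [intervalIntegral.integral_comp_sub_right (fun x => x) c, integral_id]
  ring

theorem aux_int_sq (c s : ℝ) (hs : 0 ≤ s) :
    ∫ t in Icc (c - s/2) (c + s/2), (t - c) * (t - c) = s^3/12 := by
  have h : ∀ t : ℝ, (t - c) * (t - c) = (t - c)^2 := fun t => by ring
  simp_rw [h]
  rw [integral_Icc_eq_integral_Ioc, ← intervalIntegral.integral_of_le (by linarith)]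
  rw [intervalIntegral.integral_comp_sub_right (fun x => x^2) c, integral_pow]
  ring

theorem aux_K_eq {d : ℕ} (a g : EuclideanSpace ℝ (Fin d)) (s : ℝ) (hs : 0 < s) :
    ∫ y in Set.pi univ (fun i => Icc (a i - s/2) (a i + s/2)),
      (∑ i, g i * (y i - a i))^2 = (s ^ d * (s^2/12)) * ∑ i, g i * g i := by
  set S : Fin d → Set ℝ := fun i => Icc (a i - s/2) (a i + s/2) with hSdef
  have hSm : ∀ i, MeasurableSet (S i) := fun i => measurableSet_Icc
  have hT : IsCompact (Set.pi univ S) := isCompact_univ_pi fun i => isCompact_Icc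
  have hint : ∀ F : (Fin d → ℝ) → ℝ, Continuous F → IntegrableOn F (Set.pi univ S) :=
    fun F hF => hF.continuousOn.integrableOn_compact hT
  have hexp : ∀ y : Fin d → ℝ, (∑ i, g i * (y i - a i))^2
      = ∑ i, ∑ j, (g i * (y i - a i)) * (g j * (y j - a j)) := by
    intro y
    rw [pow_two, Finset.sum_mul_sum]
  simp_rw [hexp]
  rw [integral_finset_sum _ (fun i _ => hint _ (by fun_prop))]
  have hterm : ∀ i j : Fin d, (∫ y in Set.pi univ S,
      (g i * (y i - a i)) * (g j * (y j - a j)))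
      = if j = i then g i * g i * (s ^ d * (s^2/12)) else 0 := by
    intro i j
    have hre : ∀ y : Fin d → ℝ, (g i * (y i - a i)) * (g j * (y j - a j))
        = g i * g j * ((y i - a i) * (y j - a j)) := fun y => by ring
    simp_rw [hre]
    rw [MeasureTheory.integral_const_mul]
    by_cases hij : j = i
    · subst hij
      rw [if_pos rfl]
      have hpt : ∀ y : Fin d → ℝ, (y j - a j) * (y j - a j)
          = ∏ k, (fun k t => if k = j then (t - a j) * (t - a j) else 1) k (y k) := by
        intro y
        rw [Finset.prod_eq_single j (fun k _ hk => if_neg hk)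
          (fun h => absurd (Finset.mem_univ j) h)]
        simp
      simp_rw [hpt]
      rw [aux_prod_integral S hSm (fun k t => if k = j then (t - a j) * (t - a j) else 1)]
      have hfac : ∀ k : Fin d, (∫ t in S k, (if k = j then (t - a j) * (t - a j) else 1))
          = s * (if k = j then s^2/12 else 1) := by
        intro k
        by_cases hk : k = j
        · subst hk
          simp only [eq_self_iff_true, if_true, ite_true, hSdef]
          rw [aux_int_sq _ _ hs.le]; ring
        · simp only [if_neg hk, hSdef]
          rw [aux_int_one _ _ hs.le]; ring
      rw [Finset.prod_congr rfl (fun k _ => hfac k), Finset.prod_mul_distrib,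
        Finset.prod_const, Finset.prod_ite_eq' Finset.univ j (fun _ => s^2/12),
        if_pos (Finset.mem_univ j)]
      simp [Finset.card_univ]
    · rw [if_neg hij]
      have hpt : ∀ y : Fin d → ℝ, (y i - a i) * (y j - a j)
          = ∏ k, (fun k t => if k = i then t - a i else if k = j then t - a j else 1) k (y k) := by
        intro y
        have hsub : ({i, j} : Finset (Fin d)) ⊆ Finset.univ := Finset.subset_univ _
        rw [← Finset.prod_subset hsub (fun k _ hk => by
          simp only [Finset.mem_insert, Finset.mem_singleton] at hk
          push_neg at hk
          simp [if_neg hk.1, if_neg hk.2])]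
        rw [Finset.prod_insert (by simpa using fun h => hij h.symm), Finset.prod_singleton]
        have hji : ¬ (j = i) := hij
        simp [hji]
      simp_rw [hpt]
      rw [aux_prod_integral S hSm
        (fun k t => if k = i then t - a i else if k = j then t - a j else 1)]
      rw [Finset.prod_eq_zero (Finset.mem_univ i)]
      · ring
      · simp only [eq_self_iff_true, if_true, ite_true, hSdef]
        exact aux_int_lin _ _ hs.le
  calc ∑ i, ∫ y in Set.pi univ S, ∑ j, (g i * (y i - a i)) * (g j * (y j - a j))
      = ∑ i, ∑ j, ∫ y in Set.pi univ S, (g i * (y i - a i)) * (g j * (y j - a j)) :=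
        Finset.sum_congr rfl fun i _ => integral_finset_sum _ (fun j _ => hint _ (by fun_prop))
    _ = ∑ i, ∑ j, (if j = i then g i * g i * (s ^ d * (s^2/12)) else 0) :=
        Finset.sum_congr rfl fun i _ => Finset.sum_congr rfl fun j _ => hterm i j
    _ = ∑ i, g i * g i * (s ^ d * (s^2/12)) := by
        refine Finset.sum_congr rfl fun i _ => ?_
        rw [Finset.sum_ite_eq' Finset.univ i (fun _ => g i * g i * (s ^ d * (s^2/12))),
          if_pos (Finset.mem_univ i)]
    _ = (s ^ d * (s^2/12)) * ∑ i, g i * g i := by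
        rw [Finset.mul_sum]
        exact Finset.sum_congr rfl fun i _ => by ring

variable {d : ℕ}

noncomputable def cube' (a : EuclideanSpace ℝ (Fin d)) (s : ℝ) : Set (EuclideanSpace ℝ (Fin d)) :=
  {x | ∀ i, x i ∈ Set.Icc (a i - s / 2) (a i + s / 2)}

theorem cube'_eq_preimage (a : EuclideanSpace ℝ (Fin d)) (s : ℝ) :
    cube' a s = ((MeasurableEquiv.toLp 2 (Fin d → ℝ)).symm) ⁻¹'
      (Set.pi univ fun i => Icc (a i - s/2) (a i + s/2)) := by
  ext x
  simp only [cube', mem_setOf_eq, mem_preimage, Set.mem_pi, mem_univ, true_implies]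
  exact Iff.rfl

theorem cube'_volume (a : EuclideanSpace ℝ (Fin d)) (s : ℝ) (hs : 0 ≤ s) :
    volume (cube' a s) = ENNReal.ofReal (s ^ d) := by
  rw [cube'_eq_preimage, (EuclideanSpace.volume_preserving_symm_measurableEquiv_toLp (Fin d)).measure_preimage
    ((MeasurableSet.univ_pi fun i => measurableSet_Icc).nullMeasurableSet)]
  rw [volume_pi_pi]
  simp only [Real.volume_Icc, show ∀ i : Fin d, a i + s/2 - (a i - s/2) = s from fun i => by ring]
  rw [Finset.prod_const, Finset.card_univ, Fintype.card_fin, ← ENNReal.ofReal_pow hs]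

theorem cube'_transfer (a : EuclideanSpace ℝ (Fin d)) (s : ℝ) (G : EuclideanSpace ℝ (Fin d) → ℝ) :
    ∫ x in cube' a s, G x
      = ∫ y in Set.pi univ (fun i => Icc (a i - s/2) (a i + s/2)),
          G (((MeasurableEquiv.toLp 2 (Fin d → ℝ)).symm).symm y) := by
  rw [cube'_eq_preimage]
  rw [← (EuclideanSpace.volume_preserving_symm_measurableEquiv_toLp (Fin d)).setIntegral_preimage_emb
    (MeasurableEquiv.measurableEmbedding _)
    (fun y => G (((MeasurableEquiv.toLp 2 (Fin d → ℝ)).symm).symm y)) _]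
  simp

theorem cube'_compact (a : EuclideanSpace ℝ (Fin d)) (s : ℝ) : IsCompact (cube' a s) := by
  have h : cube' a s = (⇑((MeasurableEquiv.toLp 2 (Fin d → ℝ)).symm).symm) ''
      (Set.pi univ fun i => Icc (a i - s/2) (a i + s/2)) := by
    rw [cube'_eq_preimage, ← MeasurableEquiv.image_symm]
  rw [h]
  exact ((isCompact_univ_pi fun i => isCompact_Icc).image
    (PiLp.continuousLinearEquiv 2 ℝ (fun _ : Fin d => ℝ)).symm.continuous)

theorem aux_inner_formula (g a x : EuclideanSpace ℝ (Fin d)) :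
    ⟪g, x - a⟫ = ∑ i, g i * (x i - a i) := by
  rw [PiLp.inner_apply]
  refine Finset.sum_congr rfl fun i _ => ?_
  simp [RCLike.inner_apply, PiLp.sub_apply, mul_comm]

theorem aux_norm_sub_sq (a x : EuclideanSpace ℝ (Fin d)) :
    ‖x - a‖^2 = ∑ i, (x i - a i)^2 := by
  rw [← real_inner_self_eq_norm_sq, PiLp.inner_apply]
  refine Finset.sum_congr rfl fun i _ => ?_
  simp [RCLike.inner_apply, PiLp.sub_apply, sq]

theorem aux_cs {α : Type*} [MeasurableSpace α] (μ : Measure α) (L R : α → ℝ)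
    (hL2 : MemLp L (ENNReal.ofReal 2) μ) (hR2 : MemLp R (ENNReal.ofReal 2) μ)
    (hLR : Integrable (fun x => L x * R x) μ) :
    ∫ x, L x * R x ∂μ ≤ Real.sqrt (∫ x, (L x)^2 ∂μ) * Real.sqrt (∫ x, (R x)^2 ∂μ) := by
  have h1 : ∫ x, L x * R x ∂μ ≤ ∫ x, ‖L x‖ * ‖R x‖ ∂μ := by
    refine integral_mono hLR ?_ fun x => ?_
    · have := hLR.abs
      simpa [abs_mul] using this
    · exact (le_abs_self _).trans (le_of_eq (abs_mul _ _))
  have h2 := MeasureTheory.integral_mul_norm_le_Lp_mul_Lq (μ := μ)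
    Real.HolderConjugate.two_two hL2 hR2
  refine h1.trans (h2.trans (le_of_eq ?_))
  have hrw : ∀ G : α → ℝ, ∫ x, ‖G x‖ ^ (2:ℝ) ∂μ = ∫ x, (G x)^2 ∂μ := by
    intro G
    refine integral_congr_ae (Eventually.of_forall fun x => ?_)
    simp only [Real.rpow_two, Real.norm_eq_abs, sq_abs]
  rw [hrw L, hrw R, ← Real.sqrt_eq_rpow, ← Real.sqrt_eq_rpow]

theorem aux_varOn_le (f : EuclideanSpace ℝ (Fin d) → ℝ)
    (Ω : Set (EuclideanSpace ℝ (Fin d))) (w : ℝ) (hw : 0 < w)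
    (hvol : (volume Ω).toReal = w) (hfin : volume Ω ≠ ⊤)
    (hf : IntegrableOn f Ω) (hf2 : IntegrableOn (fun x => (f x)^2) Ω) (c : ℝ) :
    varOn f Ω ≤ w⁻¹ * ∫ x in Ω, (f x - c)^2 := by
  unfold varOn meanOn
  have hconst : ∀ t : ℝ, IntegrableOn (fun _ => t) Ω volume :=
    fun t => integrableOn_const hfin
  have key : ∀ t : ℝ, ∫ x in Ω, (f x - t)^2
      = (∫ x in Ω, (f x)^2) - 2*t*(∫ x in Ω, f x) + w * t^2 := by
    intro t
    have hpt : ∀ x, (f x - t)^2 = ((f x)^2 - (2*t) * f x) + t^2 := fun x => by ring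
    simp_rw [hpt]
    have hint1 : IntegrableOn (fun x => (f x)^2 - (2*t) * f x) Ω volume :=
      hf2.sub (hf.const_mul (2*t))
    have hint2 : IntegrableOn (fun x => (2*t) * f x) Ω volume := hf.const_mul (2*t)
    rw [integral_add hint1 (hconst _), integral_sub hf2 hint2, MeasureTheory.integral_const_mul,
      setIntegral_const, smul_eq_mul, measureReal_def, hvol]
  set I1 := ∫ x in Ω, f x
  set μ := (volume Ω).toReal⁻¹ * I1 with hμ
  have hI1 : I1 = w * μ := by
    rw [hμ, hvol]
    field_simp
  rw [hvol, key, key]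
  have hw' : w⁻¹ ≥ 0 := by positivity
  have h := sq_nonneg (c - μ)
  have hle : (∫ x in Ω, (f x)^2) - 2*μ*I1 + w*μ^2 ≤ (∫ x in Ω, (f x)^2) - 2*c*I1 + w*c^2 := by
    rw [hI1]; nlinarith
  exact mul_le_mul_of_nonneg_left hle hw'

end Aux

/-- Upper bound on the variance of `f` on a small hypercube, under a second-order
Taylor condition (Equation (12) of the paper). -/
theorem stmt13 (d : ℕ) (hd : 1 ≤ d) (f : EuclideanSpace ℝ (Fin d) → ℝ) (M : ℝ)
    (hdiff : ∀ x ∈ unitCube d, DifferentiableAt ℝ f x)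
    (htaylor : ∀ x ∈ unitCube d, ∀ a ∈ unitCube d,
        |f x - f a - ⟪gradient f a, x - a⟫| ≤ M * ‖x - a‖^2)
    (a : EuclideanSpace ℝ (Fin d)) (w : ℝ) (hw : 0 < w)
    (hsub : centeredCube d a w ⊆ unitCube d) :
    w^2 * varOn f (centeredCube d a w)
      ≤ w ^ (2+2/(d:ℝ)) *
          (‖gradient f a‖/(2*Real.sqrt 3) + 2*M*(d:ℝ) * w ^ (1/(d:ℝ)))^2 := by
  have hd0 : (d:ℝ) ≠ 0 := Nat.cast_ne_zero.2 (by omega)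
  have hΩeq : centeredCube d a w = cube' a (w ^ (1/(d:ℝ))) := rfl
  rw [hΩeq] at hsub ⊢
  set s := w ^ (1/(d:ℝ)) with hs_def
  have hs : 0 < s := Real.rpow_pos_of_pos hw _
  have hsd : s ^ d = w := by
    rw [hs_def, ← Real.rpow_natCast (w ^ (1/(d:ℝ))) d, ← Real.rpow_mul hw.le, one_div,
      inv_mul_cancel₀ hd0, Real.rpow_one]
  set Ω := cube' a s with hΩdef
  set g := gradient f a with hg
  set L : EuclideanSpace ℝ (Fin d) → ℝ := fun x => ⟪g, x - a⟫ with hL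
  set r : EuclideanSpace ℝ (Fin d) → ℝ := fun x => f x - f a - L x with hrdef
  -- basic facts about Ω
  have hΩc : IsCompact Ω := cube'_compact a s
  have hΩm : MeasurableSet Ω := hΩc.isClosed.measurableSet
  have hvolΩ : volume Ω = ENNReal.ofReal w := by rw [hΩdef, cube'_volume a s hs.le, hsd]
  have hfin : volume Ω ≠ ⊤ := by rw [hvolΩ]; exact ENNReal.ofReal_ne_top
  have hvtr : (volume Ω).toReal = w := by rw [hvolΩ, ENNReal.toReal_ofReal hw.le]
  have haΩ : a ∈ Ω := fun i => ⟨by linarith, by linarith⟩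
  have haU : a ∈ unitCube d := hsub haΩ
  -- continuity and integrability
  have hfc : ContinuousOn f Ω := fun x hx => (hdiff x (hsub hx)).continuousAt.continuousWithinAt
  have hLc : Continuous L := by
    rw [hL]
    exact continuous_const.inner (continuous_id.sub continuous_const)
  have hrc : ContinuousOn r Ω := (hfc.sub continuousOn_const).sub hLc.continuousOn
  have intOn : ∀ G : EuclideanSpace ℝ (Fin d) → ℝ, ContinuousOn G Ω → IntegrableOn G Ω :=
    fun G hG => hG.integrableOn_compact hΩc
  -- M is nonnegative
  have hM : 0 ≤ M := by
    set x₀ : EuclideanSpace ℝ (Fin d) :=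
      (WithLp.equiv 2 (Fin d → ℝ)).symm (fun i => a i + s / 2) with hx₀
    have hx₀i : ∀ i, x₀ i = a i + s / 2 := fun i => rfl
    have hx₀Ω : x₀ ∈ Ω := fun i => by rw [hx₀i i]; exact ⟨by linarith, by linarith⟩
    have hne : x₀ ≠ a := by
      intro h
      have hi : x₀ ⟨0, hd⟩ = a ⟨0, hd⟩ := by rw [h]
      rw [hx₀i] at hi
      linarith
    have ht := htaylor x₀ (hsub hx₀Ω) a haU
    have hpos : 0 < ‖x₀ - a‖^2 := by
      have hne0 : x₀ - a ≠ 0 := sub_ne_zero.2 hne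
      exact pow_pos (norm_pos_iff.2 hne0) 2
    nlinarith [abs_nonneg (f x₀ - f a - ⟪gradient f a, x₀ - a⟫)]
  -- bound on the remainder
  have hnormsq : ∀ x ∈ Ω, ‖x - a‖^2 ≤ (d:ℝ) * s^2/4 := by
    intro x hx
    rw [aux_norm_sub_sq]
    calc ∑ i, (x i - a i)^2 ≤ ∑ _i : Fin d, s^2/4 :=
          Finset.sum_le_sum fun i _ => by
            have h1 := (hx i).1; have h2 := (hx i).2
            nlinarith
      _ = (d:ℝ) * s^2/4 := by
          rw [Finset.sum_const, Finset.card_univ, Fintype.card_fin, nsmul_eq_mul]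
          ring
  set R := M * ((d:ℝ) * s^2/4) with hRdef
  have hRnn : 0 ≤ R := by
    have : (0:ℝ) ≤ (d:ℝ) * s^2/4 := by positivity
    exact mul_nonneg hM this
  have hrb : ∀ x ∈ Ω, |r x| ≤ R := by
    intro x hx
    have ht := htaylor x (hsub hx) a haU
    have h2 : M * ‖x - a‖^2 ≤ R := by
      rw [hRdef]
      exact mul_le_mul_of_nonneg_left (hnormsq x hx) hM
    exact le_trans (by simpa [hrdef, hL, hg] using ht) h2
  -- MemLp facts
  haveI : IsFiniteMeasure (volume.restrict Ω) := by
    constructor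
    rw [Measure.restrict_apply_univ, hvolΩ]
    exact ENNReal.ofReal_lt_top
  have hL2 : MemLp L (ENNReal.ofReal 2) (volume.restrict Ω) := by
    refine MemLp.of_bound hLc.aestronglyMeasurable.restrict
      (‖g‖ * Real.sqrt ((d:ℝ)*s^2/4)) ?_
    filter_upwards [self_mem_ae_restrict hΩm] with x hx
    rw [Real.norm_eq_abs]
    have h1 : |L x| ≤ ‖g‖ * ‖x - a‖ := abs_real_inner_le_norm g (x - a)
    have h2 : ‖x - a‖ ≤ Real.sqrt ((d:ℝ)*s^2/4) := by
      rw [← Real.sqrt_sq (norm_nonneg (x - a))]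
      exact Real.sqrt_le_sqrt (hnormsq x hx)
    exact h1.trans (mul_le_mul_of_nonneg_left h2 (norm_nonneg g))
  have hr2 : MemLp r (ENNReal.ofReal 2) (volume.restrict Ω) := by
    refine MemLp.of_bound (hrc.aestronglyMeasurable hΩm) R ?_
    filter_upwards [self_mem_ae_restrict hΩm] with x hx
    rw [Real.norm_eq_abs]
    exact hrb x hx
  -- the two integrals
  set A := ∫ x in Ω, (L x)^2 with hAdef
  set B := ∫ x in Ω, (r x)^2 with hBdef
  have hA : A = w * (s^2/12) * ‖g‖^2 := by
    have h1 : A = ∫ y in Set.pi univ (fun i => Icc (a i - s/2) (a i + s/2)),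
        (∑ i, g i * (y i - a i))^2 := by
      rw [hAdef, hΩdef, cube'_transfer a s (fun x => (L x)^2)]
      refine integral_congr_ae (Eventually.of_forall fun y => ?_)
      have : L (((MeasurableEquiv.toLp 2 (Fin d → ℝ)).symm).symm y) = ∑ i, g i * (y i - a i) := by
        rw [hL]
        exact aux_inner_formula g a _
      simp only [this]
    have hgg : ∑ i, g i * g i = ‖g‖^2 := by
      rw [← real_inner_self_eq_norm_sq, PiLp.inner_apply]
      exact Finset.sum_congr rfl fun i _ => by simp [RCLike.inner_apply, sq]
    rw [h1, aux_K_eq a g s hs, hgg, hsd]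
  have hAnn : 0 ≤ A := setIntegral_nonneg hΩm fun x _ => sq_nonneg _
  have hBnn : 0 ≤ B := setIntegral_nonneg hΩm fun x _ => sq_nonneg _
  have hB : B ≤ w * R^2 := by
    have hle : ∀ x ∈ Ω, (r x)^2 ≤ R^2 := by
      intro x hx
      rw [← sq_abs]
      exact pow_le_pow_left₀ (abs_nonneg _) (hrb x hx) 2
    calc B ≤ ∫ _x in Ω, R^2 :=
          setIntegral_mono_on (intOn _ (hrc.pow 2)) (intOn _ continuousOn_const) hΩm hle
      _ = w * R^2 := by rw [setIntegral_const, smul_eq_mul, measureReal_def, hvtr]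
  -- Cauchy-Schwarz
  have hcross : ∫ x in Ω, L x * r x ≤ Real.sqrt A * Real.sqrt B :=
    aux_cs (volume.restrict Ω) L r hL2 hr2 (intOn _ (hLc.continuousOn.mul hrc))
  -- split the integral
  have hsplit : ∫ x in Ω, (f x - f a)^2 = A + 2*(∫ x in Ω, L x * r x) + B := by
    have hpt : ∀ x, (f x - f a)^2 = ((L x)^2 + 2*(L x * r x)) + (r x)^2 := by
      intro x
      simp only [hrdef]
      ring
    simp_rw [hpt]
    have hi1 : IntegrableOn (fun x => (L x)^2) Ω := intOn _ ((hLc.pow 2).continuousOn)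
    have hi2 : IntegrableOn (fun x => 2*(L x * r x)) Ω :=
      (intOn _ (hLc.continuousOn.mul hrc)).const_mul 2
    have hi3 : IntegrableOn (fun x => (r x)^2) Ω := intOn _ (hrc.pow 2)
    have hi12 : IntegrableOn (fun x => (L x)^2 + 2*(L x * r x)) Ω := hi1.add hi2
    rw [integral_add hi12 hi3, integral_add hi1 hi2, MeasureTheory.integral_const_mul]
  -- the key estimate
  set X := s * ‖g‖ / (2 * Real.sqrt 3) with hXdef
  have hsqrt3 : Real.sqrt 3 > 0 := Real.sqrt_pos.2 (by norm_num)
  have hXnn : 0 ≤ X := by positivity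
  have hsqA : Real.sqrt A = Real.sqrt w * X := by
    have hXsq : (Real.sqrt w * X)^2 = A := by
      rw [hA, hXdef, mul_pow, Real.sq_sqrt hw.le, div_pow, mul_pow, mul_pow,
        Real.sq_sqrt (by norm_num : (0:ℝ) ≤ 3)]
      ring
    rw [← hXsq, Real.sqrt_sq (by positivity)]
  have hsqB : Real.sqrt B ≤ Real.sqrt w * R := by
    have : Real.sqrt B ≤ Real.sqrt (w * R^2) := Real.sqrt_le_sqrt hB
    rwa [Real.sqrt_mul hw.le, Real.sqrt_sq hRnn] at this
  have hkey : ∫ x in Ω, (f x - f a)^2 ≤ w * (X + R)^2 := by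
    have h1 : ∫ x in Ω, (f x - f a)^2 ≤ A + 2*(Real.sqrt A * Real.sqrt B) + B := by
      rw [hsplit]; linarith
    have h2 : A + 2*(Real.sqrt A * Real.sqrt B) + B = (Real.sqrt A + Real.sqrt B)^2 := by
      rw [add_sq, Real.sq_sqrt hAnn, Real.sq_sqrt hBnn]; ring
    have h3 : (Real.sqrt A + Real.sqrt B)^2 ≤ (Real.sqrt w * X + Real.sqrt w * R)^2 := by
      apply pow_le_pow_left₀ (by positivity)
      rw [hsqA]
      exact add_le_add le_rfl hsqB
    have h4 : (Real.sqrt w * X + Real.sqrt w * R)^2 = w * (X + R)^2 := by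
      rw [← mul_add, mul_pow, Real.sq_sqrt hw.le]
    linarith
  -- variance bound
  have hvar : varOn f Ω ≤ (X + R)^2 := by
    have h1 := aux_varOn_le f Ω w hw hvtr hfin (intOn _ hfc) (intOn _ (hfc.pow 2)) (f a)
    have h2 : w⁻¹ * ∫ x in Ω, (f x - f a)^2 ≤ w⁻¹ * (w * (X + R)^2) :=
      mul_le_mul_of_nonneg_left hkey (by positivity)
    rw [inv_mul_cancel_left₀ (ne_of_gt hw)] at h2
    exact h1.trans h2
  -- final computation
  have hbase : X + R ≤ s * (‖g‖/(2*Real.sqrt 3) + 2*M*(d:ℝ)*s) := by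
    rw [hXdef, hRdef, mul_add, mul_div_assoc]
    have : M * ((d:ℝ) * s^2/4) ≤ s * (2*M*(d:ℝ)*s) := by
      nlinarith [mul_nonneg (mul_nonneg hM (Nat.cast_nonneg d)) (sq_nonneg s)]
    linarith
  have hXR : (X + R)^2 ≤ s^2 * (‖g‖/(2*Real.sqrt 3) + 2*M*(d:ℝ)*s)^2 := by
    rw [← mul_pow]
    exact pow_le_pow_left₀ (by positivity) hbase 2
  have hrpow : w ^ ((2:ℝ)+2/(d:ℝ)) = w^2 * s^2 := by
    rw [Real.rpow_add hw, Real.rpow_two]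
    congr 1
    rw [hs_def, ← Real.rpow_natCast (w ^ (1/(d:ℝ))) 2, ← Real.rpow_mul hw.le]
    norm_num
    rw [inv_mul_eq_div]
  calc w^2 * varOn f Ω ≤ w^2 * (X + R)^2 :=
        mul_le_mul_of_nonneg_left hvar (by positivity)
    _ ≤ w^2 * (s^2 * (‖g‖/(2*Real.sqrt 3) + 2*M*(d:ℝ)*s)^2) :=
        mul_le_mul_of_nonneg_left hXR (by positivity)
    _ = w ^ ((2:ℝ)+2/(d:ℝ)) * (‖g‖/(2*Real.sqrt 3) + 2*M*(d:ℝ)*s)^2 := by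
        rw [hrpow]; ring
end

section
/- Let d ≥ 1 and let f : [0,1]^d → ℝ be differentiable with |f(x) − f(a) − ⟨∇f(a), x − a⟩| ≤ M‖x − a‖₂² for all x, a ∈ [0,1]^d. Let Ω_w ⊆ [0,1]^d be an axis-aligned hypercube of Lebesgue measure w > 0 centered at a, and let σ² be the variance of f on Ω_w. Then w² σ² ≥ w^{2+2/d} · max( ‖∇f(a)‖₂/(2√3) − 2Md · w^{1/d}, 0 )². -/
open MeasureTheory Filter Set
open scoped ENNReal RealInnerProductSpace

section Aux

lemma int_one (c r : ℝ) (hr : 0 ≤ r) : ∫ t in Icc (c - r) (c + r), (1:ℝ) = 2*r := by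
  simp [Real.volume_Icc]
  rw [max_eq_left (by linarith)]; ring

lemma int_lin (c r : ℝ) (hr : 0 ≤ r) : ∫ t in Icc (c - r) (c + r), (t - c) = 0 := by
  rw [MeasureTheory.integral_Icc_eq_integral_Ioc,
    ← intervalIntegral.integral_of_le (by linarith)]
  have : ∫ t in (c-r)..(c+r), (t - c) = ∫ t in (c-r-c)..(c+r-c), t := by
    rw [intervalIntegral.integral_comp_sub_right (fun u => u) c]
  rw [this, integral_id]; ring

lemma int_sq (c r : ℝ) (hr : 0 ≤ r) : ∫ t in Icc (c - r) (c + r), (t - c)^2 = 2*r^3/3 := by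
  rw [MeasureTheory.integral_Icc_eq_integral_Ioc,
    ← intervalIntegral.integral_of_le (by linarith)]
  have : ∫ t in (c-r)..(c+r), (t - c)^2 = ∫ t in (c-r-c)..(c+r-c), t^2 := by
    rw [intervalIntegral.integral_comp_sub_right (fun u => u^2) c]
  rw [this, integral_pow]; ring

lemma integral_cs {α : Type*} [MeasurableSpace α] (μ : Measure α) (v r : α → ℝ)
    (hv : Integrable (fun x => v x ^ 2) μ) (hr : Integrable (fun x => r x ^ 2) μ)
    (hvr : Integrable (fun x => v x * r x) μ) :
    (∫ x, v x * r x ∂μ) ^ 2 ≤ (∫ x, v x ^ 2 ∂μ) * (∫ x, r x ^ 2 ∂μ) := by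
  have key : ∀ t : ℝ, 0 ≤ (∫ x, v x ^ 2 ∂μ) * (t * t) + (2 * ∫ x, v x * r x ∂μ) * t
      + (∫ x, r x ^ 2 ∂μ) := by
    intro t
    have h0 : 0 ≤ ∫ x, (t * v x + r x) ^ 2 ∂μ :=
      integral_nonneg fun x => sq_nonneg _
    have hexp : ∀ x, (t * v x + r x) ^ 2
        = t^2 * v x ^ 2 + (2*t) * (v x * r x) + r x ^ 2 := by intro x; ring
    rw [show (fun x => (t * v x + r x)^2)
        = fun x => t^2 * v x ^ 2 + (2*t) * (v x * r x) + r x ^ 2 from funext hexp] at h0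
    rw [integral_add (by exact (hv.const_mul _).add (hvr.const_mul _)) hr,
      integral_add (hv.const_mul _) (hvr.const_mul _),
      MeasureTheory.integral_const_mul, MeasureTheory.integral_const_mul] at h0
    nlinarith [h0]
  have := discrim_le_zero key
  rw [discrim] at this
  nlinarith [this]

lemma box_preimage {d : ℕ} (I : Fin d → Set ℝ) :
    {x : EuclideanSpace ℝ (Fin d) | ∀ i, x i ∈ I i}
      = (MeasurableEquiv.toLp 2 (Fin d → ℝ)).symm ⁻¹' (Set.univ.pi I) := by
  ext x
  simp [Set.mem_pi, MeasurableEquiv.toLp_symm_apply]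

lemma box_measurableSet {d : ℕ} (I : Fin d → Set ℝ) (hI : ∀ i, MeasurableSet (I i)) :
    MeasurableSet {x : EuclideanSpace ℝ (Fin d) | ∀ i, x i ∈ I i} := by
  rw [box_preimage]
  exact (MeasurableSet.univ_pi hI).preimage
    (MeasurableEquiv.toLp 2 (Fin d → ℝ)).symm.measurable

lemma box_volume {d : ℕ} (I : Fin d → Set ℝ) (hI : ∀ i, MeasurableSet (I i)) :
    volume {x : EuclideanSpace ℝ (Fin d) | ∀ i, x i ∈ I i} = ∏ i, volume (I i) := by
  rw [box_preimage, (EuclideanSpace.volume_preserving_symm_measurableEquiv_toLp (Fin d)).measure_preimage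
    (MeasurableSet.univ_pi hI).nullMeasurableSet]
  exact volume_pi_pi I

lemma setIntegral_box {d : ℕ} (I : Fin d → Set ℝ) (hI : ∀ i, MeasurableSet (I i))
    (F : Fin d → ℝ → ℝ) :
    ∫ x in {x : EuclideanSpace ℝ (Fin d) | ∀ i, x i ∈ I i}, ∏ i, F i (x i)
      = ∏ i, ∫ t in I i, F i t := by
  rw [box_preimage]
  have htrans := (EuclideanSpace.volume_preserving_symm_measurableEquiv_toLp (Fin d)).setIntegral_preimage_emb
    (MeasurableEquiv.toLp 2 (Fin d → ℝ)).symm.measurableEmbedding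
    (fun y : Fin d → ℝ => ∏ i, F i (y i)) (Set.univ.pi I)
  have happ : ∀ x : EuclideanSpace ℝ (Fin d),
      (∏ i, F i ((MeasurableEquiv.toLp 2 (Fin d → ℝ)).symm x i)) = ∏ i, F i (x i) := by
    intro x; rfl
  rw [show (fun x : EuclideanSpace ℝ (Fin d) => ∏ i, F i (x i))
      = fun x => ∏ i, F i ((MeasurableEquiv.toLp 2 (Fin d → ℝ)).symm x i) from
      funext fun x => (happ x).symm]
  rw [htrans]
  rw [← MeasureTheory.integral_indicator (MeasurableSet.univ_pi hI)]
  have hind : (Set.univ.pi I).indicator (fun y : Fin d → ℝ => ∏ i, F i (y i))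
      = fun y => ∏ i, (I i).indicator (F i) (y i) := by
    funext y
    by_cases h : y ∈ Set.univ.pi I
    · rw [Set.indicator_of_mem h]
      exact Finset.prod_congr rfl fun i _ =>
        (Set.indicator_of_mem (h i (Set.mem_univ i)) _).symm
    · rw [Set.indicator_of_notMem h]
      rw [Set.mem_univ_pi] at h
      push_neg at h
      obtain ⟨i, hi⟩ := h
      exact (Finset.prod_eq_zero (Finset.mem_univ i)
        (Set.indicator_of_notMem hi _)).symm
  rw [hind, MeasureTheory.integral_fintype_prod_volume_eq_prod
      (f := fun i => (I i).indicator (F i))]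
  exact Finset.prod_congr rfl fun i _ => by
    rw [MeasureTheory.integral_indicator (hI i)]

variable {d : ℕ} (a : EuclideanSpace ℝ (Fin d)) (h : ℝ)

lemma box_int_lin (hh : 0 ≤ h) (i : Fin d) :
    ∫ x in {x : EuclideanSpace ℝ (Fin d) | ∀ i, x i ∈ Icc (a i - h/2) (a i + h/2)},
      (x i - a i) = 0 := by
  have key := setIntegral_box (fun k => Icc (a k - h/2) (a k + h/2))
    (fun k => measurableSet_Icc) (fun k t => if k = i then t - a i else 1)
  have h1 : ∀ x : EuclideanSpace ℝ (Fin d),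
      (∏ k, if k = i then x k - a i else 1) = x i - a i := by
    intro x
    rw [Finset.prod_ite_eq' Finset.univ i (fun k => x k - a i)]
    simp
  simp only [h1] at key
  rw [key]
  apply Finset.prod_eq_zero (Finset.mem_univ i)
  simp only [if_pos]
  exact int_lin (a i) (h/2) (by linarith)

lemma box_int_diag (hh : 0 ≤ h) (i : Fin d) :
    ∫ x in {x : EuclideanSpace ℝ (Fin d) | ∀ i, x i ∈ Icc (a i - h/2) (a i + h/2)},
      (x i - a i) * (x i - a i) = h^(d-1) * (h^3/12) := by
  have key := setIntegral_box (fun k => Icc (a k - h/2) (a k + h/2))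
    (fun k => measurableSet_Icc)
    (fun k t => if k = i then (t - a i) * (t - a i) else 1)
  have h1 : ∀ x : EuclideanSpace ℝ (Fin d),
      (∏ k, if k = i then (x k - a i) * (x k - a i) else 1)
        = (x i - a i) * (x i - a i) := by
    intro x
    rw [Finset.prod_ite_eq' Finset.univ i (fun k => (x k - a i) * (x k - a i))]
    simp
  simp only [h1] at key
  rw [key, ← Finset.mul_prod_erase Finset.univ _ (Finset.mem_univ i)]
  have h2 : ∫ t in Icc (a i - h/2) (a i + h/2), (if i = i then (t - a i)*(t - a i) else 1)
      = h^3/12 := by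
    simp only [if_pos]
    have e : ∀ t : ℝ, (t - a i) * (t - a i) = (t - a i)^2 := fun t => by ring
    simp only [e]
    rw [int_sq (a i) (h/2) (by linarith)]; ring
  have h3 : ∀ k ∈ Finset.univ.erase i,
      (∫ t in Icc (a k - h/2) (a k + h/2), (if k = i then (t - a i)*(t - a i) else 1)) = h := by
    intro k hk
    simp only [if_neg (Finset.ne_of_mem_erase hk)]
    rw [int_one (a k) (h/2) (by linarith)]; ring
  rw [h2, Finset.prod_congr rfl h3, Finset.prod_const, Finset.card_erase_of_mem (Finset.mem_univ i),
    Finset.card_univ, Fintype.card_fin]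
  ring

lemma box_int_cross (hh : 0 ≤ h) (i j : Fin d) (hij : i ≠ j) :
    ∫ x in {x : EuclideanSpace ℝ (Fin d) | ∀ i, x i ∈ Icc (a i - h/2) (a i + h/2)},
      (x i - a i) * (x j - a j) = 0 := by
  have key := setIntegral_box (fun k => Icc (a k - h/2) (a k + h/2))
    (fun k => measurableSet_Icc)
    (fun k t => (if k = i then t - a i else 1) * (if k = j then t - a j else 1))
  have h1 : ∀ x : EuclideanSpace ℝ (Fin d),
      (∏ k, (if k = i then x k - a i else 1) * (if k = j then x k - a j else 1))
        = (x i - a i) * (x j - a j) := by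
    intro x
    rw [Finset.prod_mul_distrib,
      Finset.prod_ite_eq' Finset.univ i (fun k => x k - a i),
      Finset.prod_ite_eq' Finset.univ j (fun k => x k - a j)]
    simp
  simp only [h1] at key
  rw [key]
  apply Finset.prod_eq_zero (Finset.mem_univ i)
  simp only [if_pos, if_neg hij, mul_one]
  exact int_lin (a i) (h/2) (by linarith)

end Aux


set_option maxHeartbeats 2000000

/-- Lower bound on the variance of `f` on a small hypercube, under a second-order
Taylor condition (Equation (13) of the paper). -/
theorem stmt14 (d : ℕ) (hd : 1 ≤ d) (f : EuclideanSpace ℝ (Fin d) → ℝ) (M : ℝ)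
    (hdiff : ∀ x ∈ unitCube d, DifferentiableAt ℝ f x)
    (htaylor : ∀ x ∈ unitCube d, ∀ a ∈ unitCube d,
        |f x - f a - ⟪gradient f a, x - a⟫| ≤ M * ‖x - a‖^2)
    (a : EuclideanSpace ℝ (Fin d)) (w : ℝ) (hw : 0 < w)
    (hsub : centeredCube d a w ⊆ unitCube d) :
    w^2 * varOn f (centeredCube d a w)
      ≥ w ^ (2+2/(d:ℝ)) *
          (max (‖gradient f a‖/(2*Real.sqrt 3) - 2*M*(d:ℝ) * w ^ (1/(d:ℝ))) 0)^2 := by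
  classical
  have hdR : (0:ℝ) < (d:ℝ) := by exact_mod_cast Nat.lt_of_lt_of_le Nat.zero_lt_one hd
  set g := gradient f a with hg
  set h := w ^ (1/(d:ℝ)) with hhdef
  have hh : 0 < h := Real.rpow_pos_of_pos hw _
  have hhd : h ^ d = w := by
    rw [hhdef, ← Real.rpow_natCast (w ^ (1/(d:ℝ))) d, ← Real.rpow_mul hw.le,
      one_div_mul_cancel (ne_of_gt hdR), Real.rpow_one]
  set S := {x : EuclideanSpace ℝ (Fin d) | ∀ i, x i ∈ Icc (a i - h/2) (a i + h/2)} with hSdef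
  have hC_eq : centeredCube d a w = S := rfl
  rw [hC_eq] at hsub ⊢
  -- basic measure facts
  have hSm : MeasurableSet S := box_measurableSet _ (fun i => measurableSet_Icc)
  have hvol : volume S = ENNReal.ofReal w := by
    rw [hSdef, box_volume _ (fun i => measurableSet_Icc)]
    have e1 : ∀ i : Fin d, volume (Icc (a i - h/2) (a i + h/2)) = ENNReal.ofReal h := by
      intro i; rw [Real.volume_Icc]; congr 1; ring
    rw [Finset.prod_congr rfl (fun i _ => e1 i), Finset.prod_const, Finset.card_univ,
      Fintype.card_fin, ← ENNReal.ofReal_pow hh.le, hhd]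
  have htoReal : (volume S).toReal = w := by rw [hvol, ENNReal.toReal_ofReal hw.le]
  -- norms on S
  have hnorm_eq : ∀ x : EuclideanSpace ℝ (Fin d), ‖x - a‖^2 = ∑ i, (x i - a i)^2 := by
    intro x
    rw [EuclideanSpace.norm_eq, Real.sq_sqrt (by positivity)]
    simp [sq_abs]
  have hnormsq : ∀ x ∈ S, ‖x - a‖^2 ≤ d * h^2 / 4 := by
    intro x hx
    rw [hnorm_eq]
    calc ∑ i, (x i - a i)^2 ≤ ∑ _i : Fin d, (h/2)^2 := by
          apply Finset.sum_le_sum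
          intro i _
          have h1 := (hx i).1; have h2 := (hx i).2
          have habs : |x i - a i| ≤ h/2 := abs_le.mpr ⟨by linarith, by linarith⟩
          calc (x i - a i)^2 = |x i - a i|^2 := (sq_abs _).symm
            _ ≤ (h/2)^2 := pow_le_pow_left₀ (abs_nonneg _) habs 2
      _ = d * (h/2)^2 := by
          rw [Finset.sum_const, Finset.card_univ, Fintype.card_fin, nsmul_eq_mul]
      _ = d * h^2 / 4 := by ring
  have hScomp : IsCompact S := by
    apply Metric.isCompact_of_isClosed_isBounded
    · have e2 : S = ⋂ i, (EuclideanSpace.proj (𝕜 := ℝ) (ι := Fin d) i)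
          ⁻¹' (Icc (a i - h/2) (a i + h/2)) := by
        ext x; simp [hSdef]
      rw [e2]
      exact isClosed_iInter fun i => isClosed_Icc.preimage (EuclideanSpace.proj i).continuous
    · apply (Metric.isBounded_closedBall (x := a) (r := Real.sqrt (d * h^2/4))).subset
      intro x hx
      rw [Metric.mem_closedBall, dist_eq_norm]
      have h1 := hnormsq x hx
      have hn : ‖x - a‖ = Real.sqrt (‖x - a‖^2) := (Real.sqrt_sq (norm_nonneg _)).symm
      rw [hn]; exact Real.sqrt_le_sqrt h1
  have hint : ∀ (F : EuclideanSpace ℝ (Fin d) → ℝ), ContinuousOn F S → IntegrableOn F S :=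
    fun F hF => hF.integrableOn_compact hScomp
  -- membership facts
  have haS : a ∈ S := by
    intro i; constructor <;> [linarith [hh.le]; linarith [hh.le]]
  have haU : a ∈ unitCube d := hsub haS
  -- M nonneg
  have hM0 : 0 ≤ M := by
    set x1 : EuclideanSpace ℝ (Fin d) := WithLp.toLp 2 (fun _ => 1) with hx1def
    have hx1 : x1 ∈ unitCube d := fun i => ⟨zero_le_one, le_rfl⟩
    have hx0 : (0 : EuclideanSpace ℝ (Fin d)) ∈ unitCube d := by
      intro i; constructor <;> simp
    have hT := htaylor x1 hx1 0 hx0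
    have hnn : (0:ℝ) ≤ M * ‖x1 - 0‖^2 := le_trans (abs_nonneg _) hT
    have hnval : ‖x1 - (0 : EuclideanSpace ℝ (Fin d))‖^2 = (d:ℝ) := by
      rw [EuclideanSpace.norm_eq, Real.sq_sqrt (by positivity)]
      simp [hx1def]
    rw [hnval] at hnn
    nlinarith [hnn, hdR]
  -- q, v, r
  set m := meanOn f S with hm
  set q : EuclideanSpace ℝ (Fin d) → ℝ := fun x => ∑ i, g i * (x i - a i) with hqdef
  have hq_inner : ∀ x : EuclideanSpace ℝ (Fin d), ⟪g, x - a⟫ = q x := by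
    intro x
    rw [PiLp.inner_apply]
    simp [RCLike.inner_apply, hqdef]
    exact Finset.sum_congr rfl fun i _ => mul_comm _ _
  have hq_cont : Continuous q := by
    apply continuous_finset_sum
    intro i _
    exact continuous_const.mul
      ((EuclideanSpace.proj (𝕜 := ℝ) (ι := Fin d) i).continuous.sub continuous_const)
  set ε := M * d * h^2 / 4 with hε
  have hε0 : 0 ≤ ε := by positivity
  set v : EuclideanSpace ℝ (Fin d) → ℝ := fun x => q x + (f a - m) with hvdef
  set r : EuclideanSpace ℝ (Fin d) → ℝ := fun x => f x - f a - q x with hrdef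
  have hfc : ContinuousOn f S := fun x hx => ((hdiff x (hsub hx)).continuousAt).continuousWithinAt
  have hvc : Continuous v := hq_cont.add continuous_const
  have hrc : ContinuousOn r S := (hfc.sub continuousOn_const).sub hq_cont.continuousOn
  -- Taylor bound on S
  have hrbound : ∀ x ∈ S, |r x| ≤ ε := by
    intro x hx
    have hT := htaylor x (hsub hx) a haU
    rw [hq_inner] at hT
    calc |r x| ≤ M * ‖x - a‖^2 := hT
      _ ≤ M * ((d:ℝ) * h^2/4) := mul_le_mul_of_nonneg_left (hnormsq x hx) hM0
      _ = ε := by rw [hε]; ring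
  -- integral of q is 0
  have hci : ∀ i : Fin d,
      IntegrableOn (fun x : EuclideanSpace ℝ (Fin d) => g i * (x i - a i)) S :=
    fun i => hint _ (Continuous.continuousOn (by
      exact continuous_const.mul
        ((EuclideanSpace.proj (𝕜 := ℝ) (ι := Fin d) i).continuous.sub continuous_const)))
  have hIq : ∫ x in S, q x = 0 := by
    simp only [hqdef]
    rw [integral_finset_sum _ (fun i _ => hci i)]
    refine Finset.sum_eq_zero fun i _ => ?_
    rw [MeasureTheory.integral_const_mul, hSdef, box_int_lin a h hh.le i, mul_zero]
  -- integral of q^2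
  have hpair : ∀ i j : Fin d, (∫ x in S, (x i - a i) * (x j - a j))
      = if i = j then h^(d-1) * (h^3/12) else 0 := by
    intro i j
    by_cases hij : i = j
    · subst hij; rw [if_pos rfl, hSdef]; exact box_int_diag a h hh.le i
    · rw [if_neg hij, hSdef]; exact box_int_cross a h hh.le i j hij
  have hIpair_int : ∀ i j : Fin d, IntegrableOn
      (fun x : EuclideanSpace ℝ (Fin d) => (g i * g j) * ((x i - a i) * (x j - a j))) S :=
    fun i j => hint _ (Continuous.continuousOn (by
      exact continuous_const.mul
        (((EuclideanSpace.proj (𝕜 := ℝ) (ι := Fin d) i).continuous.sub continuous_const).mul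
         ((EuclideanSpace.proj (𝕜 := ℝ) (ι := Fin d) j).continuous.sub continuous_const))))
  have hgnorm : ∑ i, g i^2 = ‖g‖^2 := by
    rw [EuclideanSpace.norm_eq, Real.sq_sqrt (by positivity)]
    simp [sq_abs]
  have hD : h^(d-1) * (h^3/12) = w * h^2/12 := by
    have e3 : h^(d-1) * h^3 = h^(d+2) := by
      rw [← pow_add]; congr 1; omega
    calc h^(d-1)*(h^3/12) = (h^(d-1)*h^3)/12 := by ring
      _ = h^(d+2)/12 := by rw [e3]
      _ = (h^d * h^2)/12 := by rw [pow_add]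
      _ = w*h^2/12 := by rw [hhd]
  have hIq2 : ∫ x in S, (q x)^2 = ‖g‖^2 * (w * h^2 / 12) := by
    have hexp : ∀ x : EuclideanSpace ℝ (Fin d),
        (q x)^2 = ∑ i, ∑ j, (g i * g j) * ((x i - a i) * (x j - a j)) := by
      intro x
      simp only [hqdef]
      rw [sq, Finset.sum_mul_sum]
      exact Finset.sum_congr rfl fun i _ => Finset.sum_congr rfl fun j _ => by ring
    simp only [hexp]
    rw [integral_finset_sum _ (fun i _ =>
      integrable_finset_sum _ (fun j _ => hIpair_int i j))]
    have hinner : ∀ i : Fin d,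
        (∑ j, ∫ x in S, (g i * g j) * ((x i - a i) * (x j - a j)))
          = g i * g i * (h^(d-1) * (h^3/12)) := by
      intro i
      have e : ∀ j : Fin d, (∫ x in S, (g i * g j) * ((x i - a i)*(x j - a j)))
          = if i = j then g i * g i * (h^(d-1)*(h^3/12)) else 0 := by
        intro j
        rw [MeasureTheory.integral_const_mul, hpair i j]
        by_cases hij : i = j
        · subst hij; rw [if_pos rfl, if_pos rfl]
        · rw [if_neg hij, if_neg hij, mul_zero]
      rw [Finset.sum_congr rfl (fun j _ => e j),
        Finset.sum_ite_eq Finset.univ i (fun _ => g i * g i * (h^(d-1)*(h^3/12))),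
        if_pos (Finset.mem_univ i)]
    calc ∑ i, ∫ x in S, (∑ j, (g i * g j) * ((x i - a i)*(x j - a j)))
        = ∑ i, g i * g i * (h^(d-1)*(h^3/12)) := by
          refine Finset.sum_congr rfl fun i _ => ?_
          rw [integral_finset_sum _ (fun j _ => hIpair_int i j)]
          exact hinner i
      _ = (∑ i, g i^2) * (h^(d-1)*(h^3/12)) := by
          rw [Finset.sum_mul]
          exact Finset.sum_congr rfl fun i _ => by ring
      _ = ‖g‖^2 * (w*h^2/12) := by rw [hgnorm, hD]
  -- integrability of the main players
  have hv2i : IntegrableOn (fun x => v x^2) S := hint _ (hvc.continuousOn.pow 2)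
  have hr2i : IntegrableOn (fun x => r x^2) S := hint _ (hrc.pow 2)
  have hvri : IntegrableOn (fun x => v x * r x) S := hint _ (hvc.continuousOn.mul hrc)
  have hqi : IntegrableOn q S := hint _ hq_cont.continuousOn
  have hq2i : IntegrableOn (fun x => (q x)^2) S := hint _ (hq_cont.continuousOn.pow 2)
  have hvolfin : volume S < ⊤ := by rw [hvol]; exact ENNReal.ofReal_lt_top
  -- value of ∫ v^2
  have h2c : IntegrableOn (fun x => (2*(f a - m)) * q x) S := hqi.const_mul _
  have hcc : IntegrableOn (fun _x : EuclideanSpace ℝ (Fin d) => (f a - m)^2) S :=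
    (integrableOn_const_iff).mpr (Or.inr hvolfin)
  have h2cc : IntegrableOn (fun x => (2*(f a - m)) * q x + (f a - m)^2) S := h2c.add hcc
  have hIv2 : ∫ x in S, v x^2 = ‖g‖^2 * (w * h^2 / 12) + (f a - m)^2 * w := by
    have hexp : (fun x => v x^2)
        = fun x => (q x)^2 + ((2*(f a - m)) * q x + (f a - m)^2) := by
      funext x; simp only [hvdef]; ring
    rw [hexp]
    rw [integral_add hq2i h2cc]
    rw [integral_add h2c hcc]
    rw [MeasureTheory.integral_const_mul, hIq, hIq2]
    rw [MeasureTheory.setIntegral_const, measureReal_def, htoReal]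
    simp only [smul_eq_mul, mul_zero, add_zero]
    ring
  -- bound on ∫ r^2
  have hIr2 : ∫ x in S, r x^2 ≤ ε^2 * w := by
    have hle : ∫ x in S, r x^2 ≤ ∫ _x in S, ε^2 := by
      apply setIntegral_mono_on hr2i ((integrableOn_const_iff).mpr (Or.inr hvolfin)) hSm
      intro x hx
      have hb := abs_le.mp (hrbound x hx)
      exact sq_le_sq' hb.1 hb.2
    rw [MeasureTheory.setIntegral_const, measureReal_def, htoReal, smul_eq_mul] at hle
    linarith
  -- decomposition of ∫ (f - m)^2
  have h2vr : IntegrableOn (fun x => 2*(v x * r x)) S := hvri.const_mul 2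
  have h2vrr : IntegrableOn (fun x => 2*(v x * r x) + r x^2) S := h2vr.add hr2i
  have hUdec : ∫ x in S, (f x - m)^2
      = (∫ x in S, v x^2) + 2*(∫ x in S, v x * r x) + (∫ x in S, r x^2) := by
    have hexp : (fun x => (f x - m)^2)
        = fun x => v x^2 + (2*(v x * r x) + r x^2) := by
      funext x; simp only [hvdef, hrdef]; ring
    rw [hexp]
    rw [integral_add hv2i h2vrr]
    rw [integral_add h2vr hr2i]
    rw [MeasureTheory.integral_const_mul]
    ring
  -- Cauchy-Schwarz
  have hP0 : 0 ≤ ∫ x in S, v x^2 := setIntegral_nonneg hSm fun x _ => sq_nonneg _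
  have hQ0 : 0 ≤ ∫ x in S, r x^2 := setIntegral_nonneg hSm fun x _ => sq_nonneg _
  have hCS : (∫ x in S, v x * r x)^2 ≤ (∫ x in S, v x^2) * (∫ x in S, r x^2) :=
    integral_cs _ v r hv2i hr2i hvri
  have hSvr : -(Real.sqrt (∫ x in S, v x^2) * Real.sqrt (∫ x in S, r x^2))
      ≤ ∫ x in S, v x * r x := by
    have h1 : |∫ x in S, v x * r x| ≤ Real.sqrt ((∫ x in S, v x^2) * (∫ x in S, r x^2)) := by
      rw [← Real.sqrt_sq_eq_abs]
      exact Real.sqrt_le_sqrt hCS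
    rw [Real.sqrt_mul hP0] at h1
    linarith [neg_abs_le (∫ x in S, v x * r x)]
  -- rpow arithmetic
  have hrpow : w ^ (2+2/(d:ℝ)) = w^2 * h^2 := by
    rw [Real.rpow_add hw]
    have e1 : w ^ (2:ℝ) = w^2 := by
      rw [← Real.rpow_natCast w 2]; norm_num
    have e2 : w ^ ((2:ℝ)/(d:ℝ)) = h^2 := by
      have e4 : (2:ℝ)/(d:ℝ) = (1/(d:ℝ)) * ((2:ℕ):ℝ) := by push_cast; ring
      rw [e4, Real.rpow_mul hw.le, Real.rpow_natCast, hhdef]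
    rw [e1, e2]
  -- unfold the variance
  have hvar : varOn f S = w⁻¹ * ∫ x in S, (f x - m)^2 := by
    rw [varOn, htoReal, ← hm]
  have hfe : ∀ X : ℝ, w^2*(w⁻¹*X) = w*X := fun X => by
    field_simp
  rw [ge_iff_le, hvar, hrpow]
  set T := ‖g‖/(2*Real.sqrt 3) - 2*M*(d:ℝ)*h with hTdef
  by_cases hT : T ≤ 0
  · rw [max_eq_right hT]
    have hU0 : 0 ≤ ∫ x in S, (f x - m)^2 := setIntegral_nonneg hSm fun x _ => sq_nonneg _
    have h8 : 0 ≤ w⁻¹ * ∫ x in S, (f x - m)^2 :=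
      mul_nonneg (inv_nonneg.mpr hw.le) hU0
    have h9 : (0:ℝ) ≤ w^2*(w⁻¹ * ∫ x in S, (f x - m)^2) := mul_nonneg (sq_nonneg w) h8
    calc w^2*h^2*(0:ℝ)^2 = 0 := by ring
      _ ≤ w^2*(w⁻¹ * ∫ x in S, (f x - m)^2) := h9
  · push_neg at hT
    rw [max_eq_left hT.le]
    -- key bounds
    have hBK : Real.sqrt w * h * (‖g‖/(2*Real.sqrt 3)) ≤ Real.sqrt (∫ x in S, v x^2) := by
      have hK0 : 0 ≤ Real.sqrt w * h * (‖g‖/(2*Real.sqrt 3)) := by positivity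
      have s3 : (Real.sqrt 3)^2 = 3 := Real.sq_sqrt (by norm_num)
      have sw : (Real.sqrt w)^2 = w := Real.sq_sqrt hw.le
      have hKsq : (Real.sqrt w * h * (‖g‖/(2*Real.sqrt 3)))^2 = ‖g‖^2*(w*h^2/12) := by
        have e0 : (Real.sqrt w * h * (‖g‖/(2*Real.sqrt 3)))^2
            = (Real.sqrt w)^2 * h^2 * ‖g‖^2 / ((Real.sqrt 3)^2 * 4) := by
          ring
        rw [e0, s3, sw]
        ring
      calc Real.sqrt w * h * (‖g‖/(2*Real.sqrt 3))
          = Real.sqrt ((Real.sqrt w * h * (‖g‖/(2*Real.sqrt 3)))^2) :=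
            (Real.sqrt_sq hK0).symm
        _ ≤ Real.sqrt (∫ x in S, v x^2) := by
            apply Real.sqrt_le_sqrt
            rw [hKsq, hIv2]
            nlinarith [sq_nonneg (f a - m), hw.le]
    have hRQ : Real.sqrt (∫ x in S, r x^2) ≤ ε * Real.sqrt w := by
      have hb : (∫ x in S, r x^2) ≤ (ε*Real.sqrt w)^2 := by
        rw [mul_pow, Real.sq_sqrt hw.le]
        linarith [hIr2]
      calc Real.sqrt (∫ x in S, r x^2) ≤ Real.sqrt ((ε*Real.sqrt w)^2) := Real.sqrt_le_sqrt hb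
        _ = ε*Real.sqrt w := Real.sqrt_sq (by positivity)
    have hkey : Real.sqrt w * h * T
        ≤ Real.sqrt (∫ x in S, v x^2) - Real.sqrt (∫ x in S, r x^2) := by
      have hstep : Real.sqrt w * h * T
          ≤ Real.sqrt w * h * (‖g‖/(2*Real.sqrt 3)) - ε * Real.sqrt w := by
        have hprod : 0 ≤ M * (d:ℝ) * h^2 * Real.sqrt w :=
          mul_nonneg (mul_nonneg (mul_nonneg hM0 hdR.le) (sq_nonneg h)) (Real.sqrt_nonneg w)
        have e0 : Real.sqrt w * h * (‖g‖/(2*Real.sqrt 3)) - ε * Real.sqrt w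
            - Real.sqrt w * h * T = (7/4) * (M * (d:ℝ) * h^2 * Real.sqrt w) := by
          rw [hTdef, hε]
          ring
        linarith [hprod, e0]
      exact le_trans hstep (sub_le_sub hBK hRQ)
    have hUlow : w*h^2*T^2 ≤ ∫ x in S, (f x - m)^2 := by
      have h1 : (Real.sqrt (∫ x in S, v x^2) - Real.sqrt (∫ x in S, r x^2))^2
          ≤ ∫ x in S, (f x - m)^2 := by
        rw [hUdec]
        nlinarith [hSvr, Real.sq_sqrt hP0, Real.sq_sqrt hQ0]
      have h2 : (Real.sqrt w*h*T)^2
          ≤ (Real.sqrt (∫ x in S, v x^2) - Real.sqrt (∫ x in S, r x^2))^2 := by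
        apply pow_le_pow_left₀ (by positivity) hkey
      have h3 : (Real.sqrt w*h*T)^2 = w*h^2*T^2 := by
        rw [mul_pow, mul_pow, Real.sq_sqrt hw.le]
      linarith
    calc w^2*h^2*T^2 = w*(w*h^2*T^2) := by ring
      _ ≤ w*(∫ x in S, (f x - m)^2) := mul_le_mul_of_nonneg_left hUlow hw.le
      _ = w^2*(w⁻¹*(∫ x in S, (f x - m)^2)) := (hfe _).symm
end

section
/- Let d ≥ 1 and let f : [0,1]^d → ℝ be differentiable with ∇f continuous on [0,1]^d. Let x ∈ [0,1]^d and let (Ω_n)_n be a sequence of axis-aligned hypercubes contained in [0,1]^d with x ∈ Ω_n for every n, whose diameters tend to 0; write w_n for the Lebesgue measure of Ω_n and σ_n² for the variance of f on Ω_n. Then lim_{n→∞} σ_n² / w_n^{2/d} = ‖∇f(x)‖₂² / 12. -/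
open MeasureTheory Filter Set
open scoped ENNReal RealInnerProductSpace

section Aux
variable {d : ℕ}


lemma cube_eq_preimage (a : Fin d → ℝ) (l : ℝ) :
    {x : EuclideanSpace ℝ (Fin d) | ∀ i, x i ∈ Set.Icc (a i) (a i + l)}
      = (MeasurableEquiv.toLp 2 (Fin d → ℝ)).symm ⁻¹'
        (Set.pi Set.univ (fun i => Set.Icc (a i) (a i + l))) := by
  ext y
  simp only [Set.mem_preimage, Set.mem_univ_pi]
  rfl

lemma cube_volume (a : Fin d → ℝ) {l : ℝ} (hl : 0 ≤ l) :
    volume {x : EuclideanSpace ℝ (Fin d) | ∀ i, x i ∈ Set.Icc (a i) (a i + l)}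
      = ENNReal.ofReal (l ^ d) := by
  rw [cube_eq_preimage,
    (EuclideanSpace.volume_preserving_symm_measurableEquiv_toLp (Fin d)).measure_preimage
      ((MeasurableSet.univ_pi (fun i => measurableSet_Icc)).nullMeasurableSet),
    volume_pi_pi]
  simp [Real.volume_Icc, ← ENNReal.ofReal_pow hl]

lemma cube_setIntegral (a : Fin d → ℝ) (l : ℝ) (g : EuclideanSpace ℝ (Fin d) → ℝ) :
    ∫ x in {x : EuclideanSpace ℝ (Fin d) | ∀ i, x i ∈ Set.Icc (a i) (a i + l)}, g x
      = ∫ y in Set.pi Set.univ (fun i => Set.Icc (a i) (a i + l)),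
          g ((MeasurableEquiv.toLp 2 (Fin d → ℝ)).symm.symm y) := by
  rw [cube_eq_preimage]
  exact (EuclideanSpace.volume_preserving_symm_measurableEquiv_toLp (Fin d)).setIntegral_preimage_emb
    (MeasurableEquiv.toLp 2 (Fin d → ℝ)).symm.measurableEmbedding
    (fun y => g ((MeasurableEquiv.toLp 2 (Fin d → ℝ)).symm.symm y)) _

lemma setIntegral_univ_pi (s : Fin d → Set ℝ) (hms : ∀ i, MeasurableSet (s i))
    (F : Fin d → ℝ → ℝ) :
    ∫ y in Set.pi Set.univ s, ∏ i, F i (y i) = ∏ i, ∫ t in s i, F i t := by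
  rw [← integral_indicator (MeasurableSet.univ_pi hms)]
  have h : (Set.pi Set.univ s).indicator (fun y => ∏ i, F i (y i))
      = fun y => ∏ i, (s i).indicator (F i) (y i) := by
    ext y
    by_cases hy : y ∈ Set.pi Set.univ s
    · rw [Set.indicator_of_mem hy]
      exact Finset.prod_congr rfl fun i _ =>
        (Set.indicator_of_mem (hy i (Set.mem_univ i)) _).symm
    · rw [Set.indicator_of_notMem hy]
      obtain ⟨i, hi⟩ := by simpa [Set.mem_pi] using hy
      exact (Finset.prod_eq_zero (Finset.mem_univ i)
        (by rw [Set.indicator_of_notMem hi])).symm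
  rw [h, MeasureTheory.integral_fintype_prod_volume_eq_prod (f := fun i => (s i).indicator (F i))]
  exact Finset.prod_congr rfl fun i _ => by rw [integral_indicator (hms i)]

section
open intervalIntegral
lemma integral_Icc_center (a l : ℝ) : (∫ t in Set.Icc a (a+l), (t - (a + l/2))) = 0 := by
  by_cases hl : a ≤ a + l
  · rw [MeasureTheory.integral_Icc_eq_integral_Ioc, ← intervalIntegral.integral_of_le hl]
    have := intervalIntegral.integral_comp_sub_right (a := a) (b := a+l) (fun t => t) (a + l/2)
    rw [this]
    rw [integral_id]
    ring
  · have : Set.Icc a (a+l) = ∅ := Set.Icc_eq_empty hl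
    simp [this]

lemma integral_Icc_center_sq (a l : ℝ) (hl : 0 ≤ l) :
    (∫ t in Set.Icc a (a+l), (t - (a + l/2))^2) = l^3/12 := by
  rw [MeasureTheory.integral_Icc_eq_integral_Ioc,
    ← intervalIntegral.integral_of_le (by linarith : a ≤ a + l)]
  have := intervalIntegral.integral_comp_sub_right (a := a) (b := a+l) (fun t => t^2) (a + l/2)
  rw [this]
  rw [integral_pow]
  ring

end
lemma integral_Icc_one (a l : ℝ) (hl : 0 ≤ l) :
    (∫ _ in Set.Icc a (a+l), (1:ℝ)) = l := by
  simp [Real.volume_Icc]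
  linarith

lemma setIntegral_univ_pi' (s : Fin d → Set ℝ) (hms : ∀ i, MeasurableSet (s i))
    (F : Fin d → ℝ → ℝ) (f : (Fin d → ℝ) → ℝ) (hf : ∀ y, f y = ∏ i, F i (y i)) :
    ∫ y in Set.pi Set.univ s, f y = ∏ i, ∫ t in s i, F i t := by
  rw [show f = fun y => ∏ i, F i (y i) from funext hf]
  exact setIntegral_univ_pi s hms F

lemma piCube_compact (a : Fin d → ℝ) (l : ℝ) :
    IsCompact (Set.pi Set.univ (fun i => Set.Icc (a i) (a i + l))) :=
  isCompact_univ_pi (fun i => isCompact_Icc)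

lemma pi_integral_single (a : Fin d → ℝ) {l : ℝ} (hl : 0 < l) (i : Fin d) :
    (∫ y in Set.pi Set.univ (fun k => Set.Icc (a k) (a k + l)),
      (y i - (a i + l/2))) = 0 := by
  rw [setIntegral_univ_pi' _ (fun k => measurableSet_Icc)
    (fun k t => if k = i then t - (a i + l/2) else 1) _
    (fun y => by simp [Finset.prod_ite_eq'])]
  refine Finset.prod_eq_zero (Finset.mem_univ i) ?_
  simp [integral_Icc_center (a i) l]

lemma pi_integral_pair (a : Fin d → ℝ) {l : ℝ} (hl : 0 < l) (i j : Fin d) :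
    (∫ y in Set.pi Set.univ (fun k => Set.Icc (a k) (a k + l)),
      ((y i - (a i + l/2)) * (y j - (a j + l/2))))
      = if i = j then l^(d+2)/12 else 0 := by
  by_cases hij : i = j
  · subst hij
    rw [setIntegral_univ_pi' _ (fun k => measurableSet_Icc)
      (fun k t => if k = i then (t - (a i + l/2))^2 else 1) _
      (fun y => by simp [Finset.prod_ite_eq']; ring)]
    rw [if_pos rfl]
    have hcongr : ∀ k ∈ Finset.univ, (∫ t in Set.Icc (a k) (a k + l),
        (if k = i then (t - (a i + l/2))^2 else 1))
        = (if k = i then l^3/12 else l) := by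
      intro k _
      by_cases hk : k = i
      · subst hk
        simp only [if_pos rfl]
        exact integral_Icc_center_sq (a k) l hl.le
      · simp only [if_neg hk]
        exact integral_Icc_one _ _ hl.le
    rw [Finset.prod_congr rfl hcongr, ← Finset.mul_prod_erase Finset.univ _ (Finset.mem_univ i),
      if_pos rfl]
    have : ∏ k ∈ Finset.univ.erase i, (if k = i then l^3/12 else l) = l ^ (d - 1) := by
      rw [Finset.prod_congr rfl (fun k hk => if_neg (Finset.ne_of_mem_erase hk)),
        Finset.prod_const, Finset.card_erase_of_mem (Finset.mem_univ i)]
      simp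
    rw [this, show l^3/12 * l^(d-1) = l^3 * l^(d-1) / 12 by ring, ← pow_add]
    have hd : 0 < d := i.pos
    congr 2
    omega
  · rw [setIntegral_univ_pi' _ (fun k => measurableSet_Icc)
      (fun k t => (if k = i then t - (a i + l/2) else 1) *
            (if k = j then t - (a j + l/2) else 1)) _
      (fun y => by rw [Finset.prod_mul_distrib]; simp [Finset.prod_ite_eq', hij])]
    rw [if_neg hij]
    refine Finset.prod_eq_zero (Finset.mem_univ i) ?_
    simp only [if_pos rfl, if_neg hij, if_true, mul_one]
    exact integral_Icc_center (a i) l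

lemma cube_isCompact (a : Fin d → ℝ) (l : ℝ) :
    IsCompact {x : EuclideanSpace ℝ (Fin d) | ∀ i, x i ∈ Set.Icc (a i) (a i + l)} := by
  have he : {x : EuclideanSpace ℝ (Fin d) | ∀ i, x i ∈ Set.Icc (a i) (a i + l)}
      = (PiLp.continuousLinearEquiv 2 ℝ (fun _ : Fin d => ℝ)).toHomeomorph ⁻¹'
        (Set.pi Set.univ (fun i => Set.Icc (a i) (a i + l))) := by
    ext y
    simp only [Set.mem_preimage, Set.mem_univ_pi]
    rfl
  rw [he, Homeomorph.isCompact_preimage]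
  exact piCube_compact a l

lemma coord_continuous (i : Fin d) : Continuous (fun x : EuclideanSpace ℝ (Fin d) => x i) :=
  (EuclideanSpace.proj (𝕜 := ℝ) i).continuous

lemma cube_integral_lin (a : Fin d → ℝ) {l : ℝ} (hl : 0 < l) (G : Fin d → ℝ) :
    (∫ x in {x : EuclideanSpace ℝ (Fin d) | ∀ i, x i ∈ Set.Icc (a i) (a i + l)},
      (∑ i, G i * (x i - (a i + l/2)))) = 0 := by
  rw [cube_setIntegral]
  have he : (fun y : Fin d → ℝ => ∑ i, G i *
      (((MeasurableEquiv.toLp 2 (Fin d → ℝ)).symm.symm y) i - (a i + l/2)))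
      = fun y => ∑ i, G i * (y i - (a i + l/2)) := rfl
  rw [he, integral_finset_sum _ (fun i _ => ((by continuity : Continuous _).continuousOn.integrableOn_compact (piCube_compact a l)))]
  refine Finset.sum_eq_zero fun i _ => ?_
  rw [MeasureTheory.integral_const_mul, pi_integral_single a hl i, mul_zero]

lemma cube_integral_lin_sq (a : Fin d → ℝ) {l : ℝ} (hl : 0 < l) (G : Fin d → ℝ) :
    (∫ x in {x : EuclideanSpace ℝ (Fin d) | ∀ i, x i ∈ Set.Icc (a i) (a i + l)},
      (∑ i, G i * (x i - (a i + l/2)))^2) = (∑ i, (G i)^2) * (l^(d+2)/12) := by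
  rw [cube_setIntegral]
  have he : (fun y : Fin d → ℝ => (∑ i, G i *
      (((MeasurableEquiv.toLp 2 (Fin d → ℝ)).symm.symm y) i - (a i + l/2)))^2)
      = fun y => ∑ i, ∑ j, (G i * G j) *
          ((y i - (a i + l/2)) * (y j - (a j + l/2))) := by
    funext y
    show (∑ i, G i * (y i - (a i + l/2)))^2 = _
    rw [sq, Finset.sum_mul_sum]
    exact Finset.sum_congr rfl fun i _ => Finset.sum_congr rfl fun j _ => by ring
  rw [he, integral_finset_sum _ (fun i _ => ((by continuity : Continuous _).continuousOn.integrableOn_compact (piCube_compact a l)))]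
  have : ∀ i ∈ Finset.univ, (∫ y in Set.pi Set.univ (fun k => Set.Icc (a k) (a k + l)),
      ∑ j, (G i * G j) * ((y i - (a i + l/2)) * (y j - (a j + l/2))))
      = (G i)^2 * (l^(d+2)/12) := by
    intro i _
    rw [integral_finset_sum _ (fun j _ => ((by continuity : Continuous _).continuousOn.integrableOn_compact (piCube_compact a l)))]
    have : ∀ j ∈ Finset.univ, (∫ y in Set.pi Set.univ (fun k => Set.Icc (a k) (a k + l)),
        (G i * G j) * ((y i - (a i + l/2)) * (y j - (a j + l/2))))
        = if i = j then (G i)^2 * (l^(d+2)/12) else 0 := by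
      intro j _
      rw [MeasureTheory.integral_const_mul, pi_integral_pair a hl i j]
      by_cases hij : i = j
      · subst hij; simp [sq]; try ring
      · simp [hij]
    rw [Finset.sum_congr rfl this, Finset.sum_ite_eq Finset.univ i
      (fun _ => (G i)^2 * (l^(d+2)/12)), if_pos (Finset.mem_univ i)]
  rw [Finset.sum_congr rfl this, ← Finset.sum_mul]

lemma cube_volume_toReal (a : Fin d → ℝ) {l : ℝ} (hl : 0 ≤ l) :
    (volume {x : EuclideanSpace ℝ (Fin d) | ∀ i, x i ∈ Set.Icc (a i) (a i + l)}).toReal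
      = l ^ d := by
  rw [cube_volume a hl, ENNReal.toReal_ofReal (pow_nonneg hl d)]

lemma lin_continuous (G : Fin d → ℝ) (m : Fin d → ℝ) :
    Continuous (fun x : EuclideanSpace ℝ (Fin d) => ∑ i, G i * (x i - m i)) := by
  refine continuous_finset_sum _ fun i _ => ?_
  exact continuous_const.mul ((coord_continuous i).sub continuous_const)

lemma meanOn_affine (a : Fin d → ℝ) {l : ℝ} (hl : 0 < l) (c : ℝ) (G : Fin d → ℝ) :
    meanOn (fun x => c + ∑ i, G i * (x i - (a i + l/2)))
      {x : EuclideanSpace ℝ (Fin d) | ∀ i, x i ∈ Set.Icc (a i) (a i + l)} = c := by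
  set C := {x : EuclideanSpace ℝ (Fin d) | ∀ i, x i ∈ Set.Icc (a i) (a i + l)}
  have hvol : volume C ≠ ⊤ := by rw [cube_volume a hl.le]; exact ENNReal.ofReal_ne_top
  have h1 : IntegrableOn (fun _ : EuclideanSpace ℝ (Fin d) => c) C := by
    apply integrableOn_const hvol
  have h2 : IntegrableOn (fun x : EuclideanSpace ℝ (Fin d) =>
      ∑ i, G i * (x i - (a i + l/2))) C :=
    (lin_continuous G _).continuousOn.integrableOn_compact (cube_isCompact a l)
  rw [meanOn, MeasureTheory.integral_add h1 h2, cube_integral_lin a hl G,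
    MeasureTheory.setIntegral_const, measureReal_def, cube_volume_toReal a hl.le, smul_eq_mul, add_zero]
  have : (l:ℝ)^d ≠ 0 := pow_ne_zero d hl.ne'
  field_simp

lemma varOn_affine (a : Fin d → ℝ) {l : ℝ} (hl : 0 < l) (c : ℝ) (G : Fin d → ℝ) :
    varOn (fun x => c + ∑ i, G i * (x i - (a i + l/2)))
      {x : EuclideanSpace ℝ (Fin d) | ∀ i, x i ∈ Set.Icc (a i) (a i + l)}
      = (∑ i, (G i)^2) * l^2 / 12 := by
  rw [varOn, meanOn_affine a hl c G]
  have he : (fun x : EuclideanSpace ℝ (Fin d) =>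
      ((c + ∑ i, G i * (x i - (a i + l/2))) - c)^2)
      = fun x => (∑ i, G i * (x i - (a i + l/2)))^2 := by
    funext y; ring
  rw [he, cube_integral_lin_sq a hl G, cube_volume_toReal a hl.le]
  have h0 : (l:ℝ)^d ≠ 0 := pow_ne_zero d hl.ne'
  have : (l:ℝ)^(d+2) = l^d * l^2 := pow_add l d 2
  rw [this]
  field_simp

section L2
variable {α : Type*} {m : MeasurableSpace α} {μ : Measure α}

lemma norm_toLp_sq {u : α → ℝ} (hu : MemLp u 2 μ) :
    ‖hu.toLp u‖ = Real.sqrt (∫ x, (u x)^2 ∂μ) := by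
  have h1 : (inner ℝ (hu.toLp u) (hu.toLp u) : ℝ) = ‖hu.toLp u‖^2 := real_inner_self_eq_norm_sq _
  have h2 : (inner ℝ (hu.toLp u) (hu.toLp u) : ℝ) = ∫ x, (u x)^2 ∂μ := by
    rw [MeasureTheory.L2.inner_def]
    refine MeasureTheory.integral_congr_ae ?_
    filter_upwards [hu.coeFn_toLp] with x hx
    simp [hx, sq]
  rw [← h2, h1, Real.sqrt_sq (norm_nonneg _)]

lemma sqrt_integral_sq_add_le {u v : α → ℝ} (hu : MemLp u 2 μ) (hv : MemLp v 2 μ) :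
    Real.sqrt (∫ x, (u x + v x)^2 ∂μ)
      ≤ Real.sqrt (∫ x, (u x)^2 ∂μ) + Real.sqrt (∫ x, (v x)^2 ∂μ) := by
  have hadd := hu.add hv
  have h1 : Real.sqrt (∫ x, (u x + v x)^2 ∂μ) = ‖hadd.toLp (u + v)‖ := by
    rw [norm_toLp_sq hadd]; rfl
  have h2 : hadd.toLp (u + v) = hu.toLp u + hv.toLp v := hu.toLp_add hv
  rw [h1, h2, ← norm_toLp_sq hu, ← norm_toLp_sq hv]
  exact norm_add_le _ _

end L2

section VarComp
variable {Ω : Set (EuclideanSpace ℝ (Fin d))}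

lemma integral_dev_zero (h0 : volume Ω ≠ 0) (hT : volume Ω ≠ ⊤)
    {p : EuclideanSpace ℝ (Fin d) → ℝ} (hp : Integrable p (volume.restrict Ω)) :
    (∫ x in Ω, (p x - meanOn p Ω)) = 0 := by
  have hw : (volume Ω).toReal ≠ 0 := ENNReal.toReal_ne_zero.2 ⟨h0, hT⟩
  rw [MeasureTheory.integral_sub hp (integrableOn_const hT),
    MeasureTheory.setIntegral_const, measureReal_def, meanOn, smul_eq_mul]
  field_simp
  ring

lemma integral_sq_mean_min (h0 : volume Ω ≠ 0) (hT : volume Ω ≠ ⊤)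
    {p : EuclideanSpace ℝ (Fin d) → ℝ} (hp : MemLp p 2 (volume.restrict Ω)) (c : ℝ) :
    (∫ x in Ω, (p x - meanOn p Ω)^2) ≤ ∫ x in Ω, (p x - c)^2 := by
  haveI : IsFiniteMeasure (volume.restrict Ω) := ⟨by rw [Measure.restrict_apply_univ]; exact hT.lt_top⟩
  have hpi : Integrable p (volume.restrict Ω) := hp.integrable one_le_two
  have hμ := meanOn p Ω
  set μp := meanOn p Ω with hμp
  have h1 : Integrable (fun x => (p x - c)^2) (volume.restrict Ω) :=
    (hp.sub (memLp_const c)).integrable_sq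
  have h2 : Integrable (fun x => (p x - μp)^2) (volume.restrict Ω) :=
    (hp.sub (memLp_const μp)).integrable_sq
  have key : (∫ x in Ω, ((p x - c)^2 - (p x - μp)^2))
      = (volume Ω).toReal * (μp - c)^2 := by
    have he : (fun x => (p x - c)^2 - (p x - μp)^2)
        = fun x => (μp - c) * (2 * (p x - μp)) + (volume Ω).toReal⁻¹ * ((volume Ω).toReal * (μp - c)^2) := by
      funext y
      have hw : (volume Ω).toReal ≠ 0 := ENNReal.toReal_ne_zero.2 ⟨h0, hT⟩
      field_simp
      ring
    have h3 : Integrable (fun x => (μp - c) * (2 * (p x - μp))) (volume.restrict Ω) :=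
      ((hpi.sub (integrable_const μp)).const_mul 2).const_mul _
    rw [he, MeasureTheory.integral_add h3 (integrable_const _), MeasureTheory.integral_const_mul, MeasureTheory.integral_const_mul,
      integral_dev_zero h0 hT hpi, MeasureTheory.setIntegral_const, measureReal_def, smul_eq_mul]
    have hw : (volume Ω).toReal ≠ 0 := ENNReal.toReal_ne_zero.2 ⟨h0, hT⟩
    field_simp
    ring
  have := MeasureTheory.integral_sub h1 h2
  nlinarith [ENNReal.toReal_nonneg (a := volume Ω), sq_nonneg (μp - c),
    mul_nonneg (ENNReal.toReal_nonneg (a := volume Ω)) (sq_nonneg (μp - c))]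

lemma sqrt_int_dev_comparison (h0 : volume Ω ≠ 0) (hT : volume Ω ≠ ⊤)
    {p q : EuclideanSpace ℝ (Fin d) → ℝ}
    (hp : MemLp p 2 (volume.restrict Ω)) (hq : MemLp q 2 (volume.restrict Ω)) :
    Real.sqrt (∫ x in Ω, (p x - meanOn p Ω)^2)
      ≤ Real.sqrt (∫ x in Ω, (q x - meanOn q Ω)^2)
        + Real.sqrt (∫ x in Ω, (p x - q x)^2) := by
  haveI : IsFiniteMeasure (volume.restrict Ω) :=
    ⟨by rw [Measure.restrict_apply_univ]; exact hT.lt_top⟩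
  have h1 : Real.sqrt (∫ x in Ω, (p x - meanOn p Ω)^2)
      ≤ Real.sqrt (∫ x in Ω, (p x - meanOn q Ω)^2) :=
    Real.sqrt_le_sqrt (integral_sq_mean_min h0 hT hp (meanOn q Ω))
  refine h1.trans ?_
  have he : (fun x => (p x - meanOn q Ω)^2)
      = fun x => ((q x - meanOn q Ω) + (p x - q x))^2 := by
    funext y; ring
  rw [he]
  exact sqrt_integral_sq_add_le (hq.sub (memLp_const _)) (hp.sub hq)

lemma sqrt_varOn_diff_le (h0 : volume Ω ≠ 0) (hT : volume Ω ≠ ⊤)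
    {p q : EuclideanSpace ℝ (Fin d) → ℝ} (hΩm : MeasurableSet Ω)
    (hp : MemLp p 2 (volume.restrict Ω)) (hq : MemLp q 2 (volume.restrict Ω))
    {e : ℝ} (he : 0 ≤ e) (hbound : ∀ y ∈ Ω, |p y - q y| ≤ e) :
    |Real.sqrt (varOn p Ω) - Real.sqrt (varOn q Ω)| ≤ e := by
  haveI : IsFiniteMeasure (volume.restrict Ω) :=
    ⟨by rw [Measure.restrict_apply_univ]; exact hT.lt_top⟩
  set w := (volume Ω).toReal with hw
  have hwpos : 0 < w := ENNReal.toReal_pos h0 hT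
  have hSp : Real.sqrt (varOn p Ω)
      = Real.sqrt w⁻¹ * Real.sqrt (∫ x in Ω, (p x - meanOn p Ω)^2) := by
    rw [varOn, ← hw, Real.sqrt_mul (by positivity)]
  have hSq : Real.sqrt (varOn q Ω)
      = Real.sqrt w⁻¹ * Real.sqrt (∫ x in Ω, (q x - meanOn q Ω)^2) := by
    rw [varOn, ← hw, Real.sqrt_mul (by positivity)]
  have hdist : ∫ x in Ω, (p x - q x)^2 ≤ e^2 * w := by
    have hle : ∫ x in Ω, (p x - q x)^2 ≤ ∫ x in Ω, e^2 := by
      refine MeasureTheory.setIntegral_mono_on ((hp.sub hq).integrable_sq) (integrable_const _)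
        hΩm fun y hy => ?_
      have := hbound y hy
      nlinarith [abs_nonneg (p y - q y), sq_abs (p y - q y), abs_le.1 this]
    refine hle.trans ?_
    rw [MeasureTheory.setIntegral_const, measureReal_def, smul_eq_mul, ← hw]
    ring_nf
    exact le_of_eq (by ring)
  have hcomp1 := sqrt_int_dev_comparison h0 hT hp hq
  have hcomp2 := sqrt_int_dev_comparison h0 hT hq hp
  have hqp : Real.sqrt (∫ x in Ω, (q x - p x)^2) = Real.sqrt (∫ x in Ω, (p x - q x)^2) := by
    congr 1
    refine MeasureTheory.integral_congr_ae (Filter.Eventually.of_forall fun y => by ring)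
  rw [hqp] at hcomp2
  have hbnd : Real.sqrt (∫ x in Ω, (p x - q x)^2) ≤ e * Real.sqrt w := by
    refine (Real.sqrt_le_sqrt hdist).trans ?_
    rw [Real.sqrt_mul (by positivity), Real.sqrt_sq he]
  have hfin : Real.sqrt w⁻¹ * (e * Real.sqrt w) = e := by
    rw [show Real.sqrt w⁻¹ * (e * Real.sqrt w) = e * (Real.sqrt w⁻¹ * Real.sqrt w) by ring,
      ← Real.sqrt_mul (by positivity), inv_mul_cancel₀ hwpos.ne', Real.sqrt_one, mul_one]
  rw [abs_le]
  constructor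
  · rw [hSp, hSq]
    nlinarith [Real.sqrt_nonneg w⁻¹, mul_le_mul_of_nonneg_left hcomp2 (Real.sqrt_nonneg w⁻¹),
      mul_le_mul_of_nonneg_left hbnd (Real.sqrt_nonneg w⁻¹), hfin]
  · rw [hSp, hSq]
    nlinarith [Real.sqrt_nonneg w⁻¹, mul_le_mul_of_nonneg_left hcomp1 (Real.sqrt_nonneg w⁻¹),
      mul_le_mul_of_nonneg_left hbnd (Real.sqrt_nonneg w⁻¹), hfin]

end VarComp

section Taylor
open InnerProductSpace

lemma cube_convex (a : Fin d → ℝ) (l : ℝ) :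
    Convex ℝ {x : EuclideanSpace ℝ (Fin d) | ∀ i, x i ∈ Set.Icc (a i) (a i + l)} := by
  have : {x : EuclideanSpace ℝ (Fin d) | ∀ i, x i ∈ Set.Icc (a i) (a i + l)}
      = ⋂ i, ((EuclideanSpace.proj i : EuclideanSpace ℝ (Fin d) →L[ℝ] ℝ) ⁻¹'
          Set.Icc (a i) (a i + l)) := by
    ext y; simp [Set.mem_iInter, EuclideanSpace.proj]
  rw [this]
  exact convex_iInter fun i =>
    (convex_Icc _ _).linear_preimage (EuclideanSpace.proj i : _ →L[ℝ] ℝ).toLinearMap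

lemma cube_dist_le (a : Fin d → ℝ) {l : ℝ} (hl : 0 ≤ l)
    {y z : EuclideanSpace ℝ (Fin d)}
    (hy : ∀ i, y i ∈ Set.Icc (a i) (a i + l)) (hz : ∀ i, z i ∈ Set.Icc (a i) (a i + l)) :
    ‖y - z‖ ≤ l * Real.sqrt d := by
  rw [EuclideanSpace.norm_eq]
  have hle : ∑ i, ‖(y - z) i‖ ^ 2 ≤ ∑ _i : Fin d, l ^ 2 := by
    refine Finset.sum_le_sum fun i _ => ?_
    have h1 := hy i; have h2 := hz i
    have : ‖(y - z) i‖ = |y i - z i| := by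
      simp [PiLp.sub_apply]
    rw [this, sq_abs]
    nlinarith [h1.1, h1.2, h2.1, h2.2]
  refine (Real.sqrt_le_sqrt hle).trans ?_
  rw [Finset.sum_const, Finset.card_univ, Fintype.card_fin, nsmul_eq_mul,
    show (d:ℝ) * l^2 = (l * Real.sqrt d)^2 by
      rw [mul_pow, Real.sq_sqrt (Nat.cast_nonneg d)]; ring,
    Real.sqrt_sq (by positivity)]

lemma inner_eq_sum (G z : EuclideanSpace ℝ (Fin d)) :
    (inner ℝ G z : ℝ) = ∑ i, G i * z i := by
  simp [PiLp.inner_apply, RCLike.inner_apply, mul_comm]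

lemma taylor_bound {f : EuclideanSpace ℝ (Fin d) → ℝ} (a : Fin d → ℝ) {l ε : ℝ}
    (hl : 0 ≤ l) (hε : 0 ≤ ε) (G : EuclideanSpace ℝ (Fin d))
    (hdiffC : ∀ u ∈ {x : EuclideanSpace ℝ (Fin d) | ∀ i, x i ∈ Set.Icc (a i) (a i + l)},
      DifferentiableAt ℝ f u)
    (hgrad : ∀ u ∈ {x : EuclideanSpace ℝ (Fin d) | ∀ i, x i ∈ Set.Icc (a i) (a i + l)},
      ‖gradient f u - G‖ ≤ ε)
    {x : EuclideanSpace ℝ (Fin d)}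
    (hxC : x ∈ {x : EuclideanSpace ℝ (Fin d) | ∀ i, x i ∈ Set.Icc (a i) (a i + l)}) :
    ∀ y ∈ {x : EuclideanSpace ℝ (Fin d) | ∀ i, x i ∈ Set.Icc (a i) (a i + l)},
      |f y - (f x + (inner ℝ G (y - x) : ℝ))| ≤ ε * (l * Real.sqrt d) := by
  intro y hy
  set C := {x : EuclideanSpace ℝ (Fin d) | ∀ i, x i ∈ Set.Icc (a i) (a i + l)}
  set F := fun z : EuclideanSpace ℝ (Fin d) => f z - (inner ℝ G z : ℝ) with hF
  have hderiv : ∀ u ∈ C, HasFDerivWithinAt F (fderiv ℝ f u - innerSL ℝ G) C u := by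
    intro u hu
    exact (((hdiffC u hu).hasFDerivAt).sub ((innerSL ℝ G).hasFDerivAt)).hasFDerivWithinAt
  have hbound : ∀ u ∈ C, ‖fderiv ℝ f u - innerSL ℝ G‖ ≤ ε := by
    intro u hu
    have h1 : innerSL ℝ G = toDual ℝ (EuclideanSpace ℝ (Fin d)) G := by
      ext z; simp [toDual_apply_apply]
    have h2 : gradient f u - G
        = (toDual ℝ (EuclideanSpace ℝ (Fin d))).symm (fderiv ℝ f u - innerSL ℝ G) := by
      rw [gradient, h1, map_sub, LinearIsometryEquiv.symm_apply_apply]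
    have h3 : ‖fderiv ℝ f u - innerSL ℝ G‖ = ‖gradient f u - G‖ := by
      rw [h2, LinearIsometryEquiv.norm_map]
    rw [h3]
    exact hgrad u hu
  have hmvt := Convex.norm_image_sub_le_of_norm_hasFDerivWithin_le hderiv hbound
    (cube_convex a l) hxC hy
  have hFy : F y - F x = f y - (f x + (inner ℝ G (y - x) : ℝ)) := by
    simp only [hF]
    rw [inner_sub_right]
    ring
  rw [hFy] at hmvt
  calc |f y - (f x + (inner ℝ G (y - x) : ℝ))| ≤ ε * ‖y - x‖ := hmvt
    _ ≤ ε * (l * Real.sqrt d) := by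
        exact mul_le_mul_of_nonneg_left (cube_dist_le a hl hy hxC) hε

end Taylor

lemma memL2_of_continuousOn {C : Set (EuclideanSpace ℝ (Fin d))}
    (hC : IsCompact C) (hCm : MeasurableSet C) {f : EuclideanSpace ℝ (Fin d) → ℝ}
    (hf : ContinuousOn f C) : MemLp f 2 (volume.restrict C) := by
  haveI : IsFiniteMeasure (volume.restrict C) :=
    ⟨by rw [Measure.restrict_apply_univ]; exact hC.measure_lt_top⟩
  obtain ⟨M, hM⟩ := hC.exists_bound_of_continuousOn hf
  exact MemLp.of_bound (hf.aestronglyMeasurable hCm) M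
    ((ae_restrict_iff' hCm).2 (Filter.Eventually.of_forall hM))


end Aux

/-- Step 1 of the proof of Lemma 1: for hypercubes shrinking to a point `x`,
`σ²/w^{2/d} → ‖∇f(x)‖²/12`. -/
theorem stmt16 (d : ℕ) (hd : 1 ≤ d) (f : EuclideanSpace ℝ (Fin d) → ℝ)
    (hdiff : ∀ x ∈ unitCube d, DifferentiableAt ℝ f x)
    (hgradcont : ContinuousOn (gradient f) (unitCube d))
    (x : EuclideanSpace ℝ (Fin d)) (hx : x ∈ unitCube d)
    (Ω : ℕ → Set (EuclideanSpace ℝ (Fin d)))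
    (hcube : ∀ n, IsCube (Ω n)) (hsub : ∀ n, Ω n ⊆ unitCube d)
    (hmem : ∀ n, x ∈ Ω n)
    (hdiam : Tendsto (fun n => Metric.diam (Ω n)) atTop (nhds 0)) :
    Tendsto (fun n => varOn f (Ω n) / ((volume (Ω n)).toReal) ^ ((2:ℝ)/(d:ℝ)))
      atTop (nhds (‖gradient f x‖^2/12)) := by
  choose aa ll hll hΩeq using hcube
  set G := gradient f x with hGdef
  set g : EuclideanSpace ℝ (Fin d) → ℝ := fun y => f x + (inner ℝ G (y - x) : ℝ) with hg
  have hGsum : ∑ i, (G i)^2 = ‖G‖^2 := by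
    rw [EuclideanSpace.norm_eq, Real.sq_sqrt (Finset.sum_nonneg fun i _ => by positivity)]
    exact Finset.sum_congr rfl fun i _ => by rw [Real.norm_eq_abs, sq_abs]
  set L : ℝ := ‖G‖ / Real.sqrt 12 with hL
  set s : ℕ → ℝ := fun n => Real.sqrt (varOn f (Ω n)) / ll n with hs_def
  have hvar_nonneg : ∀ n, 0 ≤ varOn f (Ω n) := fun n =>
    mul_nonneg (inv_nonneg.2 ENNReal.toReal_nonneg)
      (MeasureTheory.integral_nonneg fun y => sq_nonneg _)
  have hs : Tendsto s atTop (nhds L) := by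
    rw [Metric.tendsto_atTop]
    intro ε hε
    set ε' := ε / (2 * (Real.sqrt d + 1)) with hε'def
    have hsd : (0:ℝ) ≤ Real.sqrt d := Real.sqrt_nonneg d
    have hε'pos : 0 < ε' := by positivity
    have hcx := hgradcont x hx
    rw [Metric.continuousWithinAt_iff] at hcx
    obtain ⟨δ, hδpos, hδ⟩ := hcx ε' hε'pos
    obtain ⟨N, hN⟩ := eventually_atTop.1 (hdiam.eventually (gt_mem_nhds hδpos))
    refine ⟨N, fun n hn => ?_⟩
    have hl := hll n
    have hK := hΩeq n
    have hcomp : IsCompact (Ω n) := hK ▸ cube_isCompact _ _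
    have hmeas : MeasurableSet (Ω n) := hcomp.isClosed.measurableSet
    have h0 : volume (Ω n) ≠ 0 := by
      rw [hK, cube_volume _ hl.le]
      simp only [ne_eq, ENNReal.ofReal_eq_zero, not_le]
      positivity
    have hT : volume (Ω n) ≠ ⊤ := by rw [hK, cube_volume _ hl.le]; exact ENNReal.ofReal_ne_top
    have hgradb : ∀ u ∈ Ω n, ‖gradient f u - G‖ ≤ ε' := by
      intro u hu
      have hdx : dist u x ≤ Metric.diam (Ω n) :=
        Metric.dist_le_diam_of_mem hcomp.isBounded hu (hmem n)
      have := hδ (hsub n hu) (lt_of_le_of_lt hdx (hN n hn))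
      rw [dist_eq_norm] at this
      exact this.le
    have htaylor : ∀ y ∈ Ω n, |f y - g y| ≤ ε' * (ll n * Real.sqrt d) := by
      intro y hy
      have := taylor_bound (aa n) hl.le hε'pos.le G
        (fun u hu => hdiff u (hsub n (hK ▸ hu)))
        (fun u hu => hgradb u (hK ▸ hu)) (hK ▸ hmem n) y (hK ▸ hy)
      simpa [hg] using this
    have hfC : MemLp f 2 (volume.restrict (Ω n)) :=
      memL2_of_continuousOn hcomp hmeas
        (fun u hu => (hdiff u (hsub n hu)).continuousAt.continuousWithinAt)
    have hgcont : Continuous g := by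
      have : g = fun y => f x + (innerSL ℝ G) (y - x) := by
        funext y; rw [hg]; simp
      rw [this]
      exact continuous_const.add ((innerSL ℝ G).continuous.comp
        (continuous_id.sub continuous_const))
    have hgC : MemLp g 2 (volume.restrict (Ω n)) :=
      memL2_of_continuousOn hcomp hmeas hgcont.continuousOn
    have hvarg : varOn g (Ω n) = ‖G‖^2 * (ll n)^2 / 12 := by
      have hrepr : g = fun y => (f x + ∑ i, G i * ((aa n i + ll n/2) - x i))
          + ∑ i, G i * (y i - (aa n i + ll n/2)) := by
        funext y
        rw [hg]
        simp only
        rw [inner_eq_sum]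
        have hterm : ∀ i : Fin d, G i * ((y - x) i)
            = G i * ((aa n i + ll n/2) - x i) + G i * (y i - (aa n i + ll n/2)) := by
          intro i
          have hyx : (y - x) i = y i - x i := rfl
          rw [hyx]; ring
        rw [Finset.sum_congr rfl (fun i _ => hterm i), Finset.sum_add_distrib]
        ring
      rw [hrepr, hK, varOn_affine _ hl, hGsum]
    have hsg : Real.sqrt (varOn g (Ω n)) = ll n * L := by
      have h12 : Real.sqrt 12 ^ 2 = 12 := Real.sq_sqrt (by norm_num)
      have hne : Real.sqrt 12 ≠ 0 := by positivity
      rw [hvarg, show ‖G‖^2 * (ll n)^2/12 = (ll n * L)^2 by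
        rw [hL, mul_pow, div_pow, h12]; ring]
      exact Real.sqrt_sq (by positivity)
    have hcmp := sqrt_varOn_diff_le h0 hT hmeas hfC hgC
      (e := ε' * (ll n * Real.sqrt d)) (by positivity) htaylor
    rw [Real.dist_eq]
    have hsn : s n - L = (Real.sqrt (varOn f (Ω n)) - Real.sqrt (varOn g (Ω n))) / ll n := by
      rw [hsg, hs_def]
      field_simp
    rw [hsn, abs_div, abs_of_pos hl]
    have hstep : |Real.sqrt (varOn f (Ω n)) - Real.sqrt (varOn g (Ω n))| / ll n
        ≤ ε' * Real.sqrt d := by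
      rw [div_le_iff₀ hl]
      calc |Real.sqrt (varOn f (Ω n)) - Real.sqrt (varOn g (Ω n))|
          ≤ ε' * (ll n * Real.sqrt d) := hcmp
        _ = ε' * Real.sqrt d * ll n := by ring
    refine lt_of_le_of_lt hstep ?_
    rw [hε'def]
    rw [div_mul_eq_mul_div, div_lt_iff₀ (by positivity)]
    nlinarith [hsd, hε]
  have heq : (fun n => varOn f (Ω n) / ((volume (Ω n)).toReal) ^ ((2:ℝ)/(d:ℝ)))
      = fun n => (s n)^2 := by
    funext n
    have hl := hll n
    have hvt : (volume (Ω n)).toReal = (ll n)^d := by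
      rw [hΩeq n, cube_volume_toReal _ hl.le]
    have hdne : (d:ℝ) ≠ 0 := Nat.cast_ne_zero.2 (by omega)
    have hrpow : (((ll n)^d : ℝ)) ^ ((2:ℝ)/(d:ℝ)) = (ll n)^2 := by
      rw [← Real.rpow_natCast (ll n) d, ← Real.rpow_mul hl.le]
      rw [show (d:ℝ) * ((2:ℝ)/(d:ℝ)) = 2 by field_simp]
      rw [show ((2:ℝ) : ℝ) = ((2:ℕ) : ℝ) by norm_num, Real.rpow_natCast]
    rw [hvt, hrpow, hs_def]
    rw [div_pow, Real.sq_sqrt (hvar_nonneg n)]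
  rw [heq, show ‖gradient f x‖^2/12 = L^2 by
    rw [hL, div_pow, Real.sq_sqrt (by norm_num : (0:ℝ) ≤ 12), hGdef]]
  exact hs.pow 2
end
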